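/- arXiv:2103.09579 — 4 statements merged into one kernel-verified Lean document; each statement's English description precedes it below -/
import Mathlib

section
/- Let μ be a Borel probability measure on the circle group 𝕋 = ℝ/ℤ, let I ⊆ 𝕋 be a set with nonempty interior, and let C > 0 be a constant such that ∫_I g(u) du ≤ C ∫_I g(u) dμ(u) for every continuous function g ≥ 0 on 𝕋 (where du denotes the Haar/Lebesgue probability measure on 𝕋). Then there exist N ∈ ℕ, N ≥ 1, and points t₁, …, t_N ∈ 𝕋 such that, defining the probability measure μ' = (1/N) ∑_{j=1}^N (δ_{t_j} * μ) (i.e. the average of the pushforwards of μ under the translations u ↦ u + t_j), one has ∫_𝕋 g(u) du ≤ C·N·∫_𝕋 g(u) dμ'(u) for every continuous function g ≥ 0 on 𝕋. -/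
open MeasureTheory
open scoped ENNReal

lemma restrict_finset_biUnion_le {α ι : Type*} [MeasurableSpace α] (μ : Measure α)
    (s : Finset ι) (V : ι → Set α) :
    μ.restrict (⋃ i ∈ s, V i) ≤ ∑ i ∈ s, μ.restrict (V i) := by
  classical
  induction s using Finset.induction_on with
  | empty => simp
  | insert _ _ hi ih =>
    rename_i a s'
    rw [Finset.set_biUnion_insert, Finset.sum_insert hi]
    exact (Measure.restrict_union_le _ _).trans (add_le_add le_rfl ih)

/-- If `μ` is a Borel probability measure on the circle `𝕋 = ℝ/ℤ`,
`I ⊆ 𝕋` has nonempty interior, and `C > 0` is such that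
`∫_I g du ≤ C ∫_I g dμ` for every continuous `g ≥ 0`, then there are `N ≥ 1` and
points `t₁, …, t_N` such that, with `μ' = (1/N) ∑_j (δ_{t_j} * μ)`,
`∫_𝕋 g du ≤ C·N·∫_𝕋 g dμ'` for every continuous `g ≥ 0`. -/
theorem stmt0 (μ : Measure UnitAddCircle) [IsProbabilityMeasure μ]
    (I : Set UnitAddCircle) (hI : (interior I).Nonempty)
    (C : ℝ) (hC : 0 < C)
    (h : ∀ g : C(UnitAddCircle, ℝ), (∀ u, 0 ≤ g u) →
      ∫ u in I, g u ≤ C * ∫ u in I, g u ∂μ) :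
    ∃ (N : ℕ), 1 ≤ N ∧ ∃ t : Fin N → UnitAddCircle,
      ∀ g : C(UnitAddCircle, ℝ), (∀ u, 0 ≤ g u) →
        ∫ u, g u ≤ C * N *
          ∫ u, g u ∂((N : ℝ≥0∞)⁻¹ •
            ∑ j : Fin N, Measure.map (fun u => u + t j) μ) := by
  classical
  obtain ⟨u₀, hu₀⟩ := hI
  set V : UnitAddCircle → Set UnitAddCircle := fun t => (fun x => x - t) ⁻¹' interior I
    with hV
  have hVopen : ∀ t, IsOpen (V t) := fun t =>
    isOpen_interior.preimage (continuous_id.sub continuous_const)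
  have hcover : Set.univ ⊆ ⋃ t : UnitAddCircle, V t := by
    intro x _
    exact Set.mem_iUnion.2 ⟨x - u₀, by simp [hV, hu₀]⟩
  obtain ⟨s, hs⟩ := isCompact_univ.elim_finite_subcover V hVopen hcover
  have hsne : s.Nonempty := by
    rcases Set.mem_iUnion₂.1 (hs (Set.mem_univ 0)) with ⟨i, hi, -⟩
    exact ⟨i, hi⟩
  set N := s.card with hN
  have hN1 : 1 ≤ N := Finset.card_pos.2 hsne
  have hNne : (N : ℝ) ≠ 0 := by positivity
  set t : Fin N → UnitAddCircle := fun j => (s.equivFin.symm j : UnitAddCircle) with ht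
  refine ⟨N, hN1, t, ?_⟩
  intro g hg
  -- basic integrability
  have hgc : HasCompactSupport (⇑g) :=
    IsCompact.of_isClosed_subset isCompact_univ (isClosed_tsupport _) (Set.subset_univ _)
  have hgint : ∀ (ν : Measure UnitAddCircle) [IsFiniteMeasure ν], Integrable (⇑g) ν := by
    intro ν _
    exact g.continuous.integrable_of_hasCompactSupport hgc
  -- translated functions
  set G : UnitAddCircle → C(UnitAddCircle, ℝ) := fun τ =>
    g.comp ⟨fun u => u + τ, continuous_id.add continuous_const⟩ with hG
  have hGnn : ∀ τ u, 0 ≤ G τ u := fun τ u => hg _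
  -- step 1: ∫ g ≤ ∑ over cover
  have hcov_eq : (⋃ i ∈ s, V i) = Set.univ := Set.eq_univ_of_univ_subset hs
  have step1 : ∫ u, g u ≤ ∑ i ∈ s, ∫ u in V i, g u := by
    have hle : (volume : Measure UnitAddCircle) ≤ ∑ i ∈ s, volume.restrict (V i) := by
      have := restrict_finset_biUnion_le (volume : Measure UnitAddCircle) s V
      rwa [hcov_eq, Measure.restrict_univ] at this
    have hintsum : Integrable (⇑g) (∑ i ∈ s, volume.restrict (V i)) := by
      apply integrable_finset_sum_measure.2
      intro i _
      exact (hgint volume).restrict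
    calc ∫ u, g u ≤ ∫ u, g u ∂(∑ i ∈ s, volume.restrict (V i)) :=
          integral_mono_measure hle (Filter.Eventually.of_forall hg) hintsum
      _ = ∑ i ∈ s, ∫ u in V i, g u := integral_finset_sum_measure fun i _ => (hgint volume).restrict
  -- step 2: each piece
  have step2 : ∀ τ : UnitAddCircle, ∫ u in V τ, g u ≤ C * ∫ u, g u ∂(Measure.map (fun u => u + τ) μ) := by
    intro τ
    have hmp : MeasurePreserving (fun x : UnitAddCircle => x - τ) volume volume := by
      simpa [sub_eq_add_neg] using measurePreserving_add_right (volume : Measure UnitAddCircle) (-τ)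
    have hemb : MeasurableEmbedding (fun x : UnitAddCircle => x - τ) :=
      (Homeomorph.subRight τ).measurableEmbedding
    have key : ∫ u in (fun x => x - τ) ⁻¹' I, g u = ∫ u in I, G τ u := by
      have h0 := hmp.setIntegral_preimage_emb hemb (fun u => G τ u) I
      simpa [hG, sub_add_cancel] using h0
    have h1 : ∫ u in V τ, g u ≤ ∫ u in (fun x => x - τ) ⁻¹' I, g u := by
      apply setIntegral_mono_set ((hgint volume).restrict)
        (Filter.Eventually.of_forall hg)
      exact Filter.Eventually.of_forall (fun x hx => interior_subset hx)
    have h2 : ∫ u in I, G τ u ≤ C * ∫ u in I, G τ u ∂μ := h (G τ) (hGnn τ)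
    have h3 : ∫ u in I, G τ u ∂μ ≤ ∫ u, G τ u ∂μ := by
      apply setIntegral_le_integral
      · exact (G τ).continuous.integrable_of_hasCompactSupport
          (IsCompact.of_isClosed_subset isCompact_univ (isClosed_tsupport _) (Set.subset_univ _))
      · exact Filter.Eventually.of_forall (hGnn τ)
    have h4 : ∫ u, G τ u ∂μ = ∫ u, g u ∂(Measure.map (fun u => u + τ) μ) := by
      rw [integral_map (measurable_add_const τ).aemeasurable g.continuous.aestronglyMeasurable]
      rfl
    calc ∫ u in V τ, g u ≤ ∫ u in I, G τ u := key ▸ h1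
      _ ≤ C * ∫ u in I, G τ u ∂μ := h2
      _ ≤ C * ∫ u, G τ u ∂μ := by nlinarith [h3]
      _ = C * ∫ u, g u ∂(Measure.map (fun u => u + τ) μ) := by rw [h4]
  -- combine
  have instmap : ∀ j : Fin N, IsProbabilityMeasure (Measure.map (fun u => u + t j) μ) :=
    fun j => Measure.isProbabilityMeasure_map (measurable_add_const (t j)).aemeasurable
  have hRHS : ∫ u, g u ∂((N : ℝ≥0∞)⁻¹ • ∑ j : Fin N, Measure.map (fun u => u + t j) μ)
      = (N : ℝ)⁻¹ * ∑ j : Fin N, ∫ u, g u ∂(Measure.map (fun u => u + t j) μ) := by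
    rw [integral_smul_measure, integral_finset_sum_measure]
    · congr 1
      simp [ENNReal.toReal_inv]
    · intro j _
      haveI := instmap j
      exact hgint _
  have hsum : ∑ i ∈ s, ∫ u in V i, g u ≤
      C * ∑ j : Fin N, ∫ u, g u ∂(Measure.map (fun u => u + t j) μ) := by
    rw [Finset.mul_sum]
    have hre : ∑ i ∈ s, ∫ u in V i, g u = ∑ j : Fin N, ∫ u in V (t j), g u := by
      rw [← Finset.sum_coe_sort s (fun i => ∫ u in V i, g u),
        ← s.equivFin.symm.sum_comp (fun i : s => ∫ u in V (i : UnitAddCircle), g u)]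
    rw [hre]
    exact Finset.sum_le_sum fun j _ => step2 (t j)
  rw [hRHS]
  calc ∫ u, g u ≤ ∑ i ∈ s, ∫ u in V i, g u := step1
    _ ≤ C * ∑ j : Fin N, ∫ u, g u ∂(Measure.map (fun u => u + t j) μ) := hsum
    _ = C * N * ((N : ℝ)⁻¹ * ∑ j : Fin N, ∫ u, g u ∂(Measure.map (fun u => u + t j) μ)) := by
        field_simp
end

section
/- Let 0 < H < 1 and define for t ∈ (0,1) the function ψ_H(t) = 4 sin²(πt) · ( ∑_{n=0}^∞ (n+t)^{-(2H+1)} + ∑_{n=0}^∞ (n+1−t)^{-(2H+1)} ). Then there exists a constant M > 0 such that ψ_H(t) ≤ M · t^{1−2H} (1−t)^{1−2H} for all t ∈ (0,1). -/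
open Real Set

lemma sum_shift (s : ℝ) (hs : 1 < s) : Summable (fun n : ℕ => ((n : ℝ) + 1) ^ (-s)) := by
  have h := (Real.summable_nat_rpow (p := -s)).2 (by linarith)
  have h2 := (summable_nat_add_iff 1).2 h
  convert h2 using 2 with n
  · rfl
  push_cast
  ring_nf

lemma sum_base (s : ℝ) (hs : 1 < s) {t : ℝ} (ht : 0 < t) (ht1 : t ≤ 1) :
    Summable (fun n : ℕ => ((n : ℝ) + t) ^ (-s)) := by
  refine Summable.of_nonneg_of_le (fun n => by positivity) (fun n => ?_)
    (((sum_shift s hs).mul_left (t ^ (-s))))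
  have hb : ((n : ℝ) + 1) * t ≤ (n : ℝ) + t := by nlinarith [Nat.cast_nonneg (α := ℝ) n]
  calc ((n : ℝ) + t) ^ (-s) ≤ (((n : ℝ) + 1) * t) ^ (-s) :=
        Real.rpow_le_rpow_of_nonpos (by positivity) hb (by linarith)
    _ = t ^ (-s) * ((n : ℝ) + 1) ^ (-s) := by
        rw [Real.mul_rpow (by positivity) ht.le]; ring

lemma sum_le (s : ℝ) (hs : 1 < s) {t : ℝ} (ht : 0 < t) (ht1 : t ≤ 1) :
    (∑' n : ℕ, ((n : ℝ) + t) ^ (-s)) ≤ t ^ (-s) + ∑' n : ℕ, ((n : ℝ) + 1) ^ (-s) := by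
  have hS := sum_base s hs ht ht1
  rw [Summable.tsum_eq_zero_add hS]
  have h0 : ((0 : ℕ) : ℝ) + t = t := by norm_num
  rw [h0]
  have hterm : ∀ n : ℕ, ((↑(n+1):ℝ) + t) ^ (-s) ≤ ((n:ℝ) + 1) ^ (-s) := fun n =>
    Real.rpow_le_rpow_of_nonpos (by positivity) (by push_cast; linarith) (by linarith)
  have := Summable.tsum_le_tsum hterm ((summable_nat_add_iff 1).2 hS) (sum_shift s hs)
  linarith

lemma half_le_rpow {x a : ℝ} (hx : 1/2 ≤ x) (hx1 : x ≤ 1) (ha : -1 ≤ a) (ha1 : a ≤ 1) :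
    1/2 ≤ x ^ a := by
  rcases le_or_gt a 0 with h | h
  · have : (1 : ℝ) ≤ x ^ a := Real.one_le_rpow_of_pos_of_le_one_of_nonpos (by linarith) hx1 h
    linarith
  · calc (1/2 : ℝ) ≤ x := hx
      _ = x ^ (1 : ℝ) := (Real.rpow_one x).symm
      _ ≤ x ^ a := Real.rpow_le_rpow_of_exponent_ge (by linarith) hx1 ha1

/-- main per-term estimate -/
lemma key (H : ℝ) (hH0 : 0 < H) (hH1 : H < 1) (t : ℝ) (ht : t ∈ Ioo (0:ℝ) 1) :
    Real.sin (Real.pi * t) ^ 2 * (∑' n : ℕ, ((n : ℝ) + t) ^ (-(2 * H + 1))) ≤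
      (2 * Real.pi ^ 2 * (8 + ∑' n : ℕ, ((n : ℝ) + 1) ^ (-(2 * H + 1)))) *
        (t ^ (1 - 2*H) * (1 - t) ^ (1 - 2*H)) := by
  obtain ⟨ht0, ht1⟩ := ht
  set s : ℝ := 2 * H + 1 with hs_def
  have hs : 1 < s := by simp only [hs_def]; linarith
  set C : ℝ := ∑' n : ℕ, ((n : ℝ) + 1) ^ (-s) with hC
  set a : ℝ := 1 - 2*H with ha_def
  have hC0 : 0 ≤ C := tsum_nonneg (fun n => by positivity)
  have hSle : (∑' n : ℕ, ((n : ℝ) + t) ^ (-s)) ≤ t ^ (-s) + C := sum_le s hs ht0 ht1.le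
  have hS0 : 0 ≤ ∑' n : ℕ, ((n : ℝ) + t) ^ (-s) := tsum_nonneg (fun n => by positivity)
  have hpi := Real.pi_pos
  have hexp1 : -1 ≤ a := by simp only [ha_def]; linarith
  have hexp2 : a ≤ 1 := by simp only [ha_def]; linarith
  have hta : 0 < t ^ a := Real.rpow_pos_of_pos ht0 a
  have h1t0 : 0 < 1 - t := by linarith
  have h1ta : 0 < (1-t) ^ a := Real.rpow_pos_of_pos h1t0 a
  rcases le_or_gt t (1/2) with hhalf | hhalf
  · -- t ≤ 1/2
    have hsin : Real.sin (Real.pi * t) ^ 2 ≤ Real.pi ^ 2 * t ^ (2:ℝ) := by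
      have h1 : Real.sin (Real.pi * t) ≤ Real.pi * t := Real.sin_le (by positivity)
      have h2 : 0 ≤ Real.sin (Real.pi * t) :=
        Real.sin_nonneg_of_nonneg_of_le_pi (by positivity) (by nlinarith)
      rw [Real.rpow_two]
      nlinarith
    have htwo : t ^ (2:ℝ) * t ^ (-s) = t ^ a := by
      rw [← Real.rpow_add ht0, hs_def, ha_def]; ring_nf
    have hA : t ^ (2:ℝ) ≤ t ^ a :=
      Real.rpow_le_rpow_of_exponent_ge ht0 ht1.le (by linarith)
    have hB : 1/2 ≤ (1-t) ^ a := half_le_rpow (by linarith) (by linarith) hexp1 hexp2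
    have ht2 : (0:ℝ) ≤ t ^ (2:ℝ) := (Real.rpow_pos_of_pos ht0 2).le
    calc Real.sin (Real.pi * t) ^ 2 * (∑' n : ℕ, ((n : ℝ) + t) ^ (-s))
        ≤ (Real.pi ^ 2 * t ^ (2:ℝ)) * (t ^ (-s) + C) :=
          mul_le_mul hsin hSle hS0 (by positivity)
      _ = Real.pi ^ 2 * (t ^ (2:ℝ) * t ^ (-s) + t ^ (2:ℝ) * C) := by ring
      _ = Real.pi ^ 2 * (t ^ a + t ^ (2:ℝ) * C) := by rw [htwo]
      _ ≤ Real.pi ^ 2 * ((1 + C) * t ^ a) := by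
          have : t ^ (2:ℝ) * C ≤ t ^ a * C := mul_le_mul_of_nonneg_right hA hC0
          nlinarith [sq_nonneg Real.pi]
      _ ≤ (2 * Real.pi ^ 2 * (8 + C)) * (t ^ a * (1-t) ^ a) := by
          have h1 : (1 + C) * t ^ a ≤ 2 * (8 + C) * (t ^ a * (1-t) ^ a) := by
            nlinarith [mul_le_mul_of_nonneg_left hB (by positivity : (0:ℝ) ≤ 2 * (8+C) * t ^ a)]
          nlinarith [sq_nonneg Real.pi]
  · -- t > 1/2
    have hsin : Real.sin (Real.pi * t) ^ 2 ≤ Real.pi ^ 2 * (1-t) ^ (2:ℝ) := by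
      have heq : Real.sin (Real.pi * t) = Real.sin (Real.pi * (1-t)) := by
        rw [show Real.pi * (1-t) = Real.pi - Real.pi * t by ring, Real.sin_pi_sub]
      have h1 : Real.sin (Real.pi * (1-t)) ≤ Real.pi * (1-t) := Real.sin_le (by positivity)
      have h2 : 0 ≤ Real.sin (Real.pi * (1-t)) :=
        Real.sin_nonneg_of_nonneg_of_le_pi (by positivity) (by nlinarith)
      rw [heq, Real.rpow_two]
      nlinarith
    have hS8 : (∑' n : ℕ, ((n : ℝ) + t) ^ (-s)) ≤ 8 + C := by
      have h1 : t ^ (-s) ≤ ((1:ℝ)/2) ^ (-s) :=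
        Real.rpow_le_rpow_of_nonpos (by norm_num) (by linarith) (by linarith)
      have h2 : ((1:ℝ)/2) ^ (-s) = (2:ℝ) ^ s := by
        rw [Real.rpow_neg (by norm_num), one_div, Real.inv_rpow (by norm_num), inv_inv]
      have h3 : (2:ℝ) ^ s ≤ (2:ℝ) ^ (3:ℝ) :=
        Real.rpow_le_rpow_of_exponent_le (by norm_num) (by simp only [hs_def]; linarith)
      have h4 : (2:ℝ) ^ (3:ℝ) = 8 := by
        rw [show (3:ℝ) = ((3:ℕ):ℝ) by norm_num, Real.rpow_natCast]; norm_num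
      linarith
    have hone : (1-t) ^ (2:ℝ) ≤ (1-t) ^ a :=
      Real.rpow_le_rpow_of_exponent_ge h1t0 (by linarith) (by linarith)
    have hB2 : 1/2 ≤ t ^ a := half_le_rpow (by linarith) ht1.le hexp1 hexp2
    have h1t2 : (0:ℝ) ≤ (1-t) ^ (2:ℝ) := (Real.rpow_pos_of_pos h1t0 2).le
    calc Real.sin (Real.pi * t) ^ 2 * (∑' n : ℕ, ((n : ℝ) + t) ^ (-s))
        ≤ (Real.pi ^ 2 * (1-t) ^ (2:ℝ)) * (8 + C) :=
          mul_le_mul hsin hS8 hS0 (by positivity)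
      _ ≤ (Real.pi ^ 2 * (1-t) ^ a) * (8 + C) :=
          mul_le_mul_of_nonneg_right
            (mul_le_mul_of_nonneg_left hone (sq_nonneg Real.pi)) (by linarith)
      _ = 1 * (Real.pi ^ 2 * (1-t) ^ a * (8 + C)) := by ring
      _ ≤ (2 * t ^ a) * (Real.pi ^ 2 * (1-t) ^ a * (8 + C)) :=
          mul_le_mul_of_nonneg_right (by linarith) (by positivity)
      _ = (2 * Real.pi ^ 2 * (8 + C)) * (t ^ a * (1-t) ^ a) := by ring


/-- The spectral density (up to a normalizing constant) of fractional Gaussian noise of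
Hurst index `H`, defined for `t ∈ (0,1)`:
`ψ_H(t) = 4 sin²(πt)·(∑_{n≥0} (n+t)^{-(2H+1)} + ∑_{n≥0} (n+1−t)^{-(2H+1)})`. -/
noncomputable def psi (H t : ℝ) : ℝ :=
  4 * Real.sin (Real.pi * t) ^ 2 *
    ((∑' n : ℕ, ((n : ℝ) + t) ^ (-(2 * H + 1))) +
      ∑' n : ℕ, ((n : ℝ) + 1 - t) ^ (-(2 * H + 1)))

/-- For `0 < H < 1` there is `M > 0` with
`ψ_H(t) ≤ M · t^{1−2H} (1−t)^{1−2H}` for all `t ∈ (0,1)`. -/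
theorem stmt3 (H : ℝ) (hH0 : 0 < H) (hH1 : H < 1) :
    ∃ M > 0, ∀ t ∈ Set.Ioo (0 : ℝ) 1,
      psi H t ≤ M * t ^ (1 - 2 * H) * (1 - t) ^ (1 - 2 * H) := by
  set C : ℝ := ∑' n : ℕ, ((n : ℝ) + 1) ^ (-(2 * H + 1)) with hC
  have hC0 : 0 ≤ C := tsum_nonneg fun n => by positivity
  have hpi := Real.pi_pos
  refine ⟨8 * (2 * Real.pi ^ 2 * (8 + C)), by nlinarith [pow_pos hpi 2], ?_⟩
  intro t ht
  obtain ⟨ht0, ht1⟩ := ht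
  have h1 := key H hH0 hH1 t ⟨ht0, ht1⟩
  have h2 := key H hH0 hH1 (1 - t) ⟨by linarith, by linarith⟩
  rw [show (1:ℝ) - (1 - t) = t by ring] at h2
  have heq : Real.sin (Real.pi * (1 - t)) = Real.sin (Real.pi * t) := by
    rw [show Real.pi * (1 - t) = Real.pi - Real.pi * t by ring, Real.sin_pi_sub]
  rw [heq] at h2
  have hS' : (∑' n : ℕ, ((n : ℝ) + 1 - t) ^ (-(2 * H + 1)))
      = ∑' n : ℕ, ((n : ℝ) + (1 - t)) ^ (-(2 * H + 1)) :=
    tsum_congr fun n => by ring_nf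
  simp only [psi, hS']
  nlinarith [h1, h2]
end

section
/- Let 1/2 < H < 1 and let 1 ≤ p < 1/(2H−1). Then the function ψ_H(t) = 4 sin²(πt) · ( ∑_{n=0}^∞ (n+t)^{-(2H+1)} + ∑_{n=0}^∞ (n+1−t)^{-(2H+1)} ) belongs to L^p((0,1), dt), i.e. ∫_0^1 ψ_H(t)^p dt < ∞. -/
open MeasureTheory
open scoped ENNReal

lemma summable_aux (a : ℝ) (ha : 1 < a) :
    Summable (fun n : ℕ => ((n : ℝ) + 1) ^ (-a)) := by
  have h : Summable (fun n : ℕ => ((n : ℝ)) ^ (-a)) :=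
    Real.summable_nat_rpow.2 (by linarith)
  have := (summable_nat_add_iff (f := fun n : ℕ => ((n : ℝ)) ^ (-a)) 1).2 h
  refine this.congr fun n => ?_
  push_cast
  ring_nf

lemma term_le_aux (a s : ℝ) (hs0 : 0 < s) (hs1 : s ≤ 1) (ha0 : 0 ≤ a) (n : ℕ) :
    ((n : ℝ) + s) ^ (-a) ≤ ((n : ℝ) + 1) ^ (-a) * s ^ (-a) := by
  have hn : (0 : ℝ) ≤ n := Nat.cast_nonneg n
  have h1 : (0 : ℝ) < ((n : ℝ) + 1) * s := by positivity
  have h2 : ((n : ℝ) + 1) * s ≤ (n : ℝ) + s := by nlinarith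
  calc ((n : ℝ) + s) ^ (-a) ≤ (((n : ℝ) + 1) * s) ^ (-a) :=
        Real.rpow_le_rpow_of_nonpos h1 h2 (by linarith)
    _ = ((n : ℝ) + 1) ^ (-a) * s ^ (-a) := Real.mul_rpow (by positivity) hs0.le

lemma tsum_le_aux (a s : ℝ) (ha : 1 < a) (hs0 : 0 < s) (hs1 : s ≤ 1) :
    (∑' n : ℕ, ((n : ℝ) + s) ^ (-a)) ≤ (∑' n : ℕ, ((n : ℝ) + 1) ^ (-a)) * s ^ (-a) := by
  have hZ := summable_aux a ha
  have hle := term_le_aux a s hs0 hs1 (by linarith)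
  have hS : Summable (fun n : ℕ => ((n : ℝ) + s) ^ (-a)) :=
    Summable.of_nonneg_of_le (fun n => Real.rpow_nonneg (by positivity) _) hle
      (hZ.mul_right _)
  have := Summable.tsum_le_tsum hle hS (hZ.mul_right _)
  rwa [tsum_mul_right] at this

lemma add_rpow_le_aux (a b p : ℝ) (ha : 0 ≤ a) (hb : 0 ≤ b) (hp : 0 ≤ p) :
    (a + b) ^ p ≤ 2 ^ p * (a ^ p + b ^ p) := by
  have h2 : (0:ℝ) ≤ (2:ℝ) ^ p := Real.rpow_nonneg (by norm_num) p
  rcases le_total a b with h | h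
  · calc (a + b) ^ p ≤ (2 * b) ^ p :=
          Real.rpow_le_rpow (by linarith) (by linarith) hp
      _ = 2 ^ p * b ^ p := Real.mul_rpow (by norm_num) hb
      _ ≤ 2 ^ p * (a ^ p + b ^ p) := by
          have := Real.rpow_nonneg ha p
          nlinarith
  · calc (a + b) ^ p ≤ (2 * a) ^ p :=
          Real.rpow_le_rpow (by linarith) (by linarith) hp
      _ = 2 ^ p * a ^ p := Real.mul_rpow (by norm_num) ha
      _ ≤ 2 ^ p * (a ^ p + b ^ p) := by
          have := Real.rpow_nonneg hb p
          nlinarith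

/-- For `1/2 < H < 1` and `1 ≤ p < 1/(2H−1)`, the function `ψ_H`
belongs to `L^p((0,1), dt)`, i.e. `∫_0^1 ψ_H(t)^p dt < ∞`. -/
theorem stmt4 (H p : ℝ) (hH0 : 1 / 2 < H) (hH1 : H < 1)
    (hp1 : 1 ≤ p) (hp2 : p < 1 / (2 * H - 1)) :
    ∫⁻ t in Set.Ioo (0 : ℝ) 1, ENNReal.ofReal (psi H t ^ p) < ⊤ := by
  set a : ℝ := 2 * H + 1 with ha_def
  have ha : 1 < a := by simp only [ha_def]; linarith
  have h2H : (0:ℝ) < 2 * H - 1 := by linarith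
  set Z : ℝ := ∑' n : ℕ, ((n : ℝ) + 1) ^ (-a) with hZ_def
  have hZ0 : 0 ≤ Z := tsum_nonneg fun n => Real.rpow_nonneg (by positivity) _
  set α : ℝ := 1 - 2 * H with hα_def
  set β : ℝ := α * p with hβ_def
  have hpb : p * (2 * H - 1) < 1 := (lt_div_iff₀ h2H).mp hp2
  have hβ : -1 < β := by
    have : β = -(p * (2 * H - 1)) := by rw [hβ_def, hα_def]; ring
    linarith [this ▸ neg_lt_neg hpb]
  set C : ℝ := 4 * Real.pi ^ 2 * Z with hC_def
  have hC0 : 0 ≤ C := by positivity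
  set K : ℝ := C ^ p * 2 ^ p with hK_def
  have hK0 : 0 ≤ K := mul_nonneg (Real.rpow_nonneg hC0 p) (Real.rpow_nonneg (by norm_num) p)
  -- pointwise bound
  have key : ∀ t ∈ Set.Ioo (0:ℝ) 1, psi H t ^ p ≤ K * (t ^ β + (1 - t) ^ β) := by
    rintro t ⟨ht0, ht1⟩
    have ht1' : (0:ℝ) < 1 - t := by linarith
    -- sums
    have hS1 : (∑' n : ℕ, ((n : ℝ) + t) ^ (-a)) ≤ Z * t ^ (-a) :=
      tsum_le_aux a t ha ht0 ht1.le
    have hS2 : (∑' n : ℕ, ((n : ℝ) + 1 - t) ^ (-a)) ≤ Z * (1 - t) ^ (-a) := by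
      have h := tsum_le_aux a (1 - t) ha ht1' (by linarith)
      have he : (∑' n : ℕ, ((n : ℝ) + 1 - t) ^ (-a))
          = ∑' n : ℕ, ((n : ℝ) + (1 - t)) ^ (-a) := by
        refine tsum_congr fun n => ?_
        congr 1
        ring
      rw [he]; exact h
    have hS1nn : 0 ≤ ∑' n : ℕ, ((n : ℝ) + t) ^ (-a) :=
      tsum_nonneg fun n => Real.rpow_nonneg (by positivity) _
    have hS2nn : 0 ≤ ∑' n : ℕ, ((n : ℝ) + 1 - t) ^ (-a) :=
      tsum_nonneg fun n => Real.rpow_nonneg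
        (by have := Nat.cast_nonneg (α := ℝ) n; linarith) _
    -- sine bounds
    have hπt : 0 ≤ Real.pi * t := by positivity
    have hπt' : Real.pi * t ≤ Real.pi :=
      mul_le_of_le_one_right Real.pi_pos.le ht1.le
    have hsin0 : 0 ≤ Real.sin (Real.pi * t) :=
      Real.sin_nonneg_of_nonneg_of_le_pi hπt hπt'
    have hsin1 : Real.sin (Real.pi * t) ^ 2 ≤ (Real.pi * t) ^ 2 :=
      pow_le_pow_left₀ hsin0 (Real.sin_le hπt) 2
    have hsin_eq : Real.sin (Real.pi * t) = Real.sin (Real.pi * (1 - t)) := by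
      rw [show Real.pi * (1 - t) = Real.pi - Real.pi * t by ring, Real.sin_pi_sub]
    have hsin2 : Real.sin (Real.pi * t) ^ 2 ≤ (Real.pi * (1 - t)) ^ 2 := by
      rw [hsin_eq]
      exact pow_le_pow_left₀ (hsin_eq ▸ hsin0) (Real.sin_le (by positivity)) 2
    -- power collapsing
    have hpow1 : t ^ (2:ℕ) * t ^ (-a) = t ^ α := by
      rw [← Real.rpow_natCast t 2, ← Real.rpow_add ht0]
      congr 1
      push_cast [ha_def, hα_def]
      ring
    have hpow2 : (1 - t) ^ (2:ℕ) * (1 - t) ^ (-a) = (1 - t) ^ α := by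
      rw [← Real.rpow_natCast (1-t) 2, ← Real.rpow_add ht1']
      congr 1
      push_cast [ha_def, hα_def]
      ring
    have hsin_sq : 0 ≤ Real.sin (Real.pi * t) ^ 2 := sq_nonneg _
    -- bound psi
    have hpsi : psi H t ≤ C * (t ^ α + (1 - t) ^ α) := by
      have hb1 : 4 * Real.sin (Real.pi * t) ^ 2 * (∑' n : ℕ, ((n : ℝ) + t) ^ (-a))
          ≤ 4 * (Real.pi * t) ^ 2 * (Z * t ^ (-a)) :=
        mul_le_mul (by linarith) hS1 hS1nn (by positivity)
      have hb2 : 4 * Real.sin (Real.pi * t) ^ 2 * (∑' n : ℕ, ((n : ℝ) + 1 - t) ^ (-a))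
          ≤ 4 * (Real.pi * (1 - t)) ^ 2 * (Z * (1 - t) ^ (-a)) :=
        mul_le_mul (by linarith) hS2 hS2nn (by positivity)
      have he1 : 4 * (Real.pi * t) ^ 2 * (Z * t ^ (-a)) = C * t ^ α := by
        rw [hC_def, ← hpow1]; ring
      have he2 : 4 * (Real.pi * (1 - t)) ^ 2 * (Z * (1 - t) ^ (-a)) = C * (1 - t) ^ α := by
        rw [hC_def, ← hpow2]; ring
      have : psi H t = 4 * Real.sin (Real.pi * t) ^ 2 * (∑' n : ℕ, ((n : ℝ) + t) ^ (-a))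
          + 4 * Real.sin (Real.pi * t) ^ 2 * (∑' n : ℕ, ((n : ℝ) + 1 - t) ^ (-a)) := by
        rw [psi, ha_def]; ring
      rw [this]
      linarith [he1 ▸ hb1, he2 ▸ hb2]
    have hpsi0 : 0 ≤ psi H t := by
      have : 0 ≤ 4 * Real.sin (Real.pi * t) ^ 2 := by positivity
      exact mul_nonneg this (by linarith)
    have htα : 0 ≤ t ^ α := Real.rpow_nonneg ht0.le _
    have ht1α : 0 ≤ (1 - t) ^ α := Real.rpow_nonneg ht1'.le _
    calc psi H t ^ p ≤ (C * (t ^ α + (1 - t) ^ α)) ^ p :=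
          Real.rpow_le_rpow hpsi0 hpsi (by linarith)
      _ = C ^ p * (t ^ α + (1 - t) ^ α) ^ p := Real.mul_rpow hC0 (by linarith)
      _ ≤ C ^ p * (2 ^ p * ((t ^ α) ^ p + ((1 - t) ^ α) ^ p)) := by
          refine mul_le_mul_of_nonneg_left ?_ (Real.rpow_nonneg hC0 p)
          exact add_rpow_le_aux _ _ p htα ht1α (by linarith)
      _ = K * (t ^ β + (1 - t) ^ β) := by
          rw [hK_def, hβ_def, ← Real.rpow_mul ht0.le, ← Real.rpow_mul ht1'.le]
          ring
  -- integrability of the majorant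
  have i1 : IntervalIntegrable (fun x : ℝ => x ^ β) volume 0 1 :=
    intervalIntegral.intervalIntegrable_rpow' hβ
  have i2 : IntervalIntegrable (fun x : ℝ => (1 - x) ^ β) volume 0 1 := by
    have := (intervalIntegral.intervalIntegrable_rpow' (a := 0) (b := 1) hβ).comp_sub_left 1
    simpa using this.symm
  have hint : IntegrableOn (fun x : ℝ => K * (x ^ β + (1 - x) ^ β)) (Set.Ioo 0 1) := by
    have h12 : IntegrableOn (fun x : ℝ => x ^ β + (1 - x) ^ β) (Set.Ioc (0:ℝ) 1) := by
      have h := i1.add i2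
      rwa [intervalIntegrable_iff_integrableOn_Ioc_of_le (by norm_num)] at h
    exact ((h12.mono_set Set.Ioo_subset_Ioc_self).const_mul K)
  calc ∫⁻ t in Set.Ioo (0:ℝ) 1, ENNReal.ofReal (psi H t ^ p)
      ≤ ∫⁻ t in Set.Ioo (0:ℝ) 1, ENNReal.ofReal (K * (t ^ β + (1 - t) ^ β)) := by
        refine setLIntegral_mono ?_ fun t ht => ENNReal.ofReal_le_ofReal (key t ht)
        apply Measurable.ennreal_ofReal
        fun_prop
    _ < ⊤ := hint.lintegral_lt_top
end

section
/- Let 0 < a < 1 and b ≥ 0 be real numbers with a + 2b ≥ 1. Define a_{nm} = |n−m|^{−a} |n|^{−b} |m|^{−b} for integers n, m with n ≠ m, n ≠ 0, m ≠ 0, and a_{nm} = 0 if n = m or n = 0 or m = 0. Then the matrix (a_{nm})_{n,m∈ℤ} defines a bounded operator on ℓ²(ℤ): there exists a constant K > 0 such that for every sequence (x_n)_{n∈ℤ} of nonnegative reals with ∑_{n∈ℤ} x_n² < ∞, one has ∑_{n∈ℤ} ( ∑_{m∈ℤ} a_{nm} x_m )² ≤ K² ∑_{n∈ℤ} x_n²,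 and in particular the quadratic form bound ∑_{n∈ℤ} ∑_{m∈ℤ} a_{nm} x_n x_m ≤ K ∑_{n∈ℤ} x_n². -/
open scoped ENNReal NNReal BigOperators

/-- Cauchy–Schwarz for `ℝ≥0∞`-valued tsums. -/
lemma ennCS {ι : Type*} (f g : ι → ℝ≥0∞) :
    ∑' i, f i * g i ≤ (∑' i, f i ^ 2) ^ ((1:ℝ)/2) * (∑' i, g i ^ 2) ^ ((1:ℝ)/2) := by
  have h2 : (2:ℝ).HolderConjugate 2 := by constructor <;> norm_num
  rw [ENNReal.tsum_eq_iSup_sum]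
  refine iSup_le fun s => ?_
  calc ∑ i ∈ s, f i * g i
      ≤ (∑ i ∈ s, f i ^ (2:ℝ)) ^ ((1:ℝ)/2) * (∑ i ∈ s, g i ^ (2:ℝ)) ^ ((1:ℝ)/2) :=
        ENNReal.inner_le_Lp_mul_Lq s f g h2
    _ ≤ (∑' i, f i ^ 2) ^ ((1:ℝ)/2) * (∑' i, g i ^ 2) ^ ((1:ℝ)/2) := by
        have hf : ∑ i ∈ s, f i ^ (2:ℝ) ≤ ∑' i, f i ^ 2 := by
          simp_rw [show (2:ℝ) = ((2:ℕ):ℝ) by norm_num, ENNReal.rpow_natCast]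
          exact ENNReal.sum_le_tsum s
        have hg : ∑ i ∈ s, g i ^ (2:ℝ) ≤ ∑' i, g i ^ 2 := by
          simp_rw [show (2:ℝ) = ((2:ℕ):ℝ) by norm_num, ENNReal.rpow_natCast]
          exact ENNReal.sum_le_tsum s
        exact mul_le_mul' (ENNReal.rpow_le_rpow hf (by norm_num))
          (ENNReal.rpow_le_rpow hg (by norm_num))


/-- Concavity step: `(x-1)^c ≤ x^c - c·x^(c-1)` for `0 ≤ c ≤ 1`, `1 ≤ x`. -/
lemma bern_step {c x : ℝ} (hc0 : 0 ≤ c) (hc1 : c ≤ 1) (hx : 1 ≤ x) :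
    (x - 1) ^ c ≤ x ^ c - c * x ^ (c - 1) := by
  have hx0 : (0:ℝ) < x := lt_of_lt_of_le one_pos hx
  have hB : (1 + (-1/x)) ^ c ≤ 1 + c * (-1/x) := by
    refine rpow_one_add_le_one_add_mul_self ?_ hc0 hc1
    rw [neg_div, neg_le_neg_iff, div_le_one hx0]; exact hx
  have h1 : 1 + (-1/x) = (x - 1)/x := by field_simp; ring
  rw [h1, Real.div_rpow (by linarith) hx0.le,
    div_le_iff₀ (Real.rpow_pos_of_pos hx0 c)] at hB
  calc (x-1)^c ≤ (1 + c * (-1/x)) * x^c := hB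
    _ = x^c - c * (x^c / x) := by ring
    _ = x^c - c * x^(c-1) := by rw [Real.rpow_sub hx0, Real.rpow_one]

lemma sum1_real {β : ℝ} (hβ0 : 0 < β) (hβ1 : β < 1) :
    ∀ N : ℕ, ∑ k ∈ Finset.Icc 1 N, ((k:ℝ)) ^ (-β) ≤ (1-β)⁻¹ * (N:ℝ) ^ (1-β) := by
  intro N
  induction N with
  | zero => simp [Real.zero_rpow (by linarith : (1:ℝ)-β ≠ 0)]
  | succ N ih =>
    rw [Finset.sum_Icc_succ_top (by omega : 1 ≤ N + 1)]
    have hN0 : (0:ℝ) ≤ (N:ℝ) := Nat.cast_nonneg N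
    have hx : (1:ℝ) ≤ (N:ℝ) + 1 := by linarith
    have hc : (0:ℝ) < 1 - β := by linarith
    have hstep := bern_step (c := 1-β) (by linarith) (by linarith) hx
    rw [show ((N:ℝ) + 1) - 1 = (N:ℝ) by ring, show (1:ℝ) - β - 1 = -β by ring] at hstep
    have cast1 : ((N+1 : ℕ):ℝ) = (N:ℝ) + 1 := by push_cast; ring
    rw [cast1]
    have h5 := mul_le_mul_of_nonneg_left hstep (inv_pos.2 hc).le
    rw [mul_sub] at h5
    have h6 : (1-β)⁻¹ * ((1-β) * ((N:ℝ)+1)^(-β)) = ((N:ℝ)+1)^(-β) := by field_simp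
    linarith

lemma sum2_real {γ : ℝ} (hγ1 : 1 < γ) (hγ2 : γ < 2) (K : ℕ) (hK : 1 ≤ K) (M : ℕ) :
    ∑ k ∈ Finset.Icc K M, ((k:ℝ)) ^ (-γ) ≤ (1 + (γ-1)⁻¹) * (K:ℝ) ^ (-(γ-1)) := by
  set δ := γ - 1 with hδ
  have hδ0 : 0 < δ := by rw [hδ]; linarith
  have hδ1 : δ < 1 := by rw [hδ]; linarith
  have hK1 : (1:ℝ) ≤ (K:ℝ) := by exact_mod_cast hK
  have main : ∀ M : ℕ, K ≤ M →
      ∑ k ∈ Finset.Icc (K+1) M, ((k:ℝ)) ^ (-γ) ≤ δ⁻¹ * ((K:ℝ)^(-δ) - (M:ℝ)^(-δ)) := by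
    intro M hM
    induction M, hM using Nat.le_induction with
    | base => simp [Finset.Icc_eq_empty_of_lt (by omega : K > K - 1), Finset.Icc_self,
        Finset.Icc_eq_empty (by omega : ¬ K + 1 ≤ K)]
    | succ M hM ih =>
      rw [Finset.sum_Icc_succ_top (by omega : K + 1 ≤ M + 1)]
      have hx1 : (1:ℝ) ≤ (M:ℝ) + 1 := by
        have : (0:ℝ) ≤ (M:ℝ) := Nat.cast_nonneg M
        linarith
      have hxpos : (0:ℝ) < (M:ℝ) + 1 := by positivity
      have hMpos : (0:ℝ) < (M:ℝ) := by
        have : 1 ≤ M := le_trans hK hM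
        exact_mod_cast this
      have hstep : δ * ((M:ℝ)+1) ^ (-γ) ≤ (M:ℝ)^(-δ) - ((M:ℝ)+1)^(-δ) := by
        have hb := bern_step (c := δ) hδ0.le hδ1.le hx1
        rw [show ((M:ℝ) + 1) - 1 = (M:ℝ) by ring] at hb
        set A := ((M:ℝ)+1) ^ δ with hA
        set B := (M:ℝ) ^ δ with hB
        have hApos : 0 < A := Real.rpow_pos_of_pos hxpos δ
        have hBpos : 0 < B := Real.rpow_pos_of_pos hMpos δ
        have hA1 : ((M:ℝ)+1) ^ (δ - 1) = A / ((M:ℝ)+1) := by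
          rw [hA, Real.rpow_sub hxpos, Real.rpow_one]
        rw [hA1] at hb
        have key : B * (1 + δ/((M:ℝ)+1)) ≤ A := by
          have h2 : B * (1 + δ/((M:ℝ)+1)) ≤ (A - δ * (A/((M:ℝ)+1))) * (1 + δ/((M:ℝ)+1)) := by
            apply mul_le_mul_of_nonneg_right hb
            positivity
          have h3 : (A - δ * (A/((M:ℝ)+1))) * (1 + δ/((M:ℝ)+1)) ≤ A := by
            have expand : (A - δ * (A/((M:ℝ)+1))) * (1 + δ/((M:ℝ)+1))
                = A * (1 - (δ/((M:ℝ)+1))^2) := by ring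
            rw [expand]
            nlinarith [sq_nonneg (δ/((M:ℝ)+1)), hApos.le]
          linarith
        have hMd : (M:ℝ)^(-δ) = B⁻¹ := by rw [hB, ← Real.rpow_neg hMpos.le]
        have hAd : ((M:ℝ)+1)^(-δ) = A⁻¹ := by rw [hA, ← Real.rpow_neg hxpos.le]
        have hgd : ((M:ℝ)+1)^(-γ) = A⁻¹ / ((M:ℝ)+1) := by
          rw [show -γ = -δ - 1 by rw [hδ]; ring, Real.rpow_sub hxpos, Real.rpow_one, hAd]
        rw [hMd, hAd, hgd]
        have hBinv : (1 + δ/((M:ℝ)+1)) / A ≤ B⁻¹ := by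
          rw [div_le_iff₀ hApos]
          have e : B⁻¹ * A = A / B := by rw [div_eq_mul_inv, mul_comm]
          rw [e, le_div_iff₀ hBpos]
          calc (1 + δ/((M:ℝ)+1)) * B = B * (1 + δ/((M:ℝ)+1)) := by ring
            _ ≤ A := key
        have expand2 : (1 + δ/((M:ℝ)+1)) / A = A⁻¹ + δ * (A⁻¹/((M:ℝ)+1)) := by
          ring
        rw [expand2] at hBinv
        linarith
      have h4 : ((M:ℝ)+1)^(-γ) ≤ δ⁻¹ * ((M:ℝ)^(-δ) - ((M:ℝ)+1)^(-δ)) := by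
        have h5 := mul_le_mul_of_nonneg_left hstep (inv_pos.2 hδ0).le
        have h6 : δ⁻¹ * (δ * (((M:ℝ)+1)^(-γ))) = ((M:ℝ)+1)^(-γ) := by field_simp
        linarith
      push_cast
      linarith
  by_cases hKM : K ≤ M
  · have hsplit : ∑ k ∈ Finset.Icc K M, ((k:ℝ))^(-γ)
        = (K:ℝ)^(-γ) + ∑ k ∈ Finset.Icc (K+1) M, ((k:ℝ))^(-γ) := by
      rw [Finset.Icc_eq_cons_Ioc hKM, Finset.sum_cons, Finset.Icc_add_one_left_eq_Ioc]
    rw [hsplit]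
    have h1 := main M hKM
    have h2 : (0:ℝ) ≤ (M:ℝ)^(-δ) := Real.rpow_nonneg (Nat.cast_nonneg M) _
    have h3 : (K:ℝ)^(-γ) ≤ (K:ℝ)^(-δ) :=
      Real.rpow_le_rpow_of_exponent_le hK1 (by rw [hδ]; linarith)
    have h7 : (0:ℝ) ≤ δ⁻¹ := (inv_pos.2 hδ0).le
    have h8 : δ⁻¹ * ((K:ℝ)^(-δ) - (M:ℝ)^(-δ)) ≤ δ⁻¹ * (K:ℝ)^(-δ) := by
      apply mul_le_mul_of_nonneg_left _ h7
      linarith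
    have expand : (1+δ⁻¹) * (K:ℝ)^(-δ) = (K:ℝ)^(-δ) + δ⁻¹*(K:ℝ)^(-δ) := by ring
    linarith
  · rw [Finset.Icc_eq_empty (by omega : ¬ K ≤ M), Finset.sum_empty]
    positivity


lemma ofReal_nat_rpow {k : ℕ} (hk : 1 ≤ k) (t : ℝ) :
    ENNReal.ofReal ((k:ℝ) ^ t) = (k : ℝ≥0∞) ^ t := by
  have hpos : (0:ℝ) < (k:ℝ) := by exact_mod_cast hk
  rw [← ENNReal.ofReal_rpow_of_pos hpos, ENNReal.ofReal_natCast]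

/-- base comparison for negative-exponent rpow in `ℝ≥0∞`. -/
lemma rpow_neg_le_of_le {t : ℝ} (ht0 : 0 ≤ t) (ht1 : t ≤ 1) {c x y : ℕ}
    (hy : 1 ≤ y) (hc : 1 ≤ c) (h : y ≤ c * x) :
    ((x:ℝ≥0∞)) ^ (-t) ≤ (c:ℝ≥0∞) * ((y:ℝ≥0∞)) ^ (-t) := by
  have hx : 1 ≤ x := by
    rcases Nat.eq_zero_or_pos x with rfl | h'
    · omega
    · exact h'
  have hcast : ((y:ℝ≥0∞)) ≤ (c:ℝ≥0∞) * (x:ℝ≥0∞) := by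
    rw [← Nat.cast_mul]; exact_mod_cast h
  have h1 : ((y:ℝ≥0∞)) ^ t ≤ ((c:ℝ≥0∞)) ^ t * ((x:ℝ≥0∞)) ^ t := by
    rw [← ENNReal.mul_rpow_of_nonneg _ _ ht0]
    exact ENNReal.rpow_le_rpow hcast ht0
  have h2 : ((c:ℝ≥0∞)) ^ t ≤ (c:ℝ≥0∞) := by
    calc ((c:ℝ≥0∞)) ^ t ≤ ((c:ℝ≥0∞)) ^ (1:ℝ) :=
          ENNReal.rpow_le_rpow_of_exponent_le (by exact_mod_cast hc) ht1
      _ = (c:ℝ≥0∞) := ENNReal.rpow_one _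
  have h3 : ((y:ℝ≥0∞)) ^ t ≤ (c:ℝ≥0∞) * ((x:ℝ≥0∞)) ^ t :=
    h1.trans (mul_le_mul_left h2 _)
  have hc0 : (c:ℝ≥0∞) ≠ 0 := by exact_mod_cast Nat.one_le_iff_ne_zero.mp hc
  have hct : (c:ℝ≥0∞) ≠ ⊤ := ENNReal.natCast_ne_top c
  rw [ENNReal.rpow_neg, ENNReal.rpow_neg]
  have h4 : ((c:ℝ≥0∞) * ((x:ℝ≥0∞)) ^ t)⁻¹ ≤ (((y:ℝ≥0∞)) ^ t)⁻¹ :=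
    ENNReal.inv_le_inv.2 h3
  have h5 : ((c:ℝ≥0∞) * ((x:ℝ≥0∞)) ^ t)⁻¹ = (c:ℝ≥0∞)⁻¹ * (((x:ℝ≥0∞)) ^ t)⁻¹ := by
    rw [ENNReal.mul_inv (Or.inl hc0) (Or.inl hct)]
  rw [h5] at h4
  calc (((x:ℝ≥0∞)) ^ t)⁻¹ = (c:ℝ≥0∞) * ((c:ℝ≥0∞)⁻¹ * (((x:ℝ≥0∞)) ^ t)⁻¹) := by
        rw [← mul_assoc, ENNReal.mul_inv_cancel hc0 hct, one_mul]
    _ ≤ (c:ℝ≥0∞) * (((y:ℝ≥0∞)) ^ t)⁻¹ := mul_le_mul_right h4 _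

lemma rpow_neg_le_one {t : ℝ} (ht : 0 ≤ t) {k : ℕ} (hk : 1 ≤ k) :
    ((k:ℝ≥0∞)) ^ (-t) ≤ 1 := by
  calc ((k:ℝ≥0∞)) ^ (-t) ≤ ((k:ℝ≥0∞)) ^ (0:ℝ) :=
        ENNReal.rpow_le_rpow_of_exponent_le (by exact_mod_cast hk) (by linarith)
    _ = 1 := ENNReal.rpow_zero

lemma sum1_enn {β : ℝ} (hβ0 : 0 < β) (hβ1 : β < 1) (N : ℕ) (hN : 1 ≤ N) :
    ∑' k : ℕ, (if 1 ≤ k ∧ k ≤ N then ((k:ℝ≥0∞)) ^ (-β) else 0)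
      ≤ ENNReal.ofReal ((1-β)⁻¹) * ((N:ℝ≥0∞)) ^ (1-β) := by
  rw [tsum_eq_sum (s := Finset.Icc 1 N) (by
    intro k hk
    rw [if_neg]
    simpa [Finset.mem_Icc] using hk)]
  have e1 : ∀ k ∈ Finset.Icc 1 N, (if 1 ≤ k ∧ k ≤ N then ((k:ℝ≥0∞)) ^ (-β) else 0)
      = ENNReal.ofReal ((k:ℝ) ^ (-β)) := by
    intro k hk
    rw [Finset.mem_Icc] at hk
    rw [if_pos hk, ofReal_nat_rpow hk.1]
  rw [Finset.sum_congr rfl e1, ← ENNReal.ofReal_sum_of_nonneg (fun k _ =>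
    Real.rpow_nonneg (Nat.cast_nonneg k) _)]
  calc ENNReal.ofReal (∑ k ∈ Finset.Icc 1 N, ((k:ℝ)) ^ (-β))
      ≤ ENNReal.ofReal ((1-β)⁻¹ * (N:ℝ) ^ (1-β)) :=
        ENNReal.ofReal_le_ofReal (sum1_real hβ0 hβ1 N)
    _ = ENNReal.ofReal ((1-β)⁻¹) * ENNReal.ofReal ((N:ℝ) ^ (1-β)) :=
        ENNReal.ofReal_mul (by
          have : (0:ℝ) < 1 - β := by linarith
          positivity)
    _ = ENNReal.ofReal ((1-β)⁻¹) * ((N:ℝ≥0∞)) ^ (1-β) := by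
        rw [ofReal_nat_rpow hN]

lemma sum2_enn {γ : ℝ} (hγ1 : 1 < γ) (hγ2 : γ < 2) (K : ℕ) (hK : 1 ≤ K) :
    ∑' k : ℕ, (if K ≤ k then ((k:ℝ≥0∞)) ^ (-γ) else 0)
      ≤ ENNReal.ofReal (1 + (γ-1)⁻¹) * ((K:ℝ≥0∞)) ^ (-(γ-1)) := by
  rw [ENNReal.tsum_eq_iSup_sum]
  refine iSup_le fun s => ?_
  set M := s.sup id with hM
  have hsub : s.filter (fun k => K ≤ k) ⊆ Finset.Icc K M := by
    intro k hk
    rw [Finset.mem_filter] at hk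
    rw [Finset.mem_Icc]
    exact ⟨hk.2, Finset.le_sup (f := id) hk.1⟩
  calc ∑ k ∈ s, (if K ≤ k then ((k:ℝ≥0∞)) ^ (-γ) else 0)
      = ∑ k ∈ s.filter (fun k => K ≤ k), ((k:ℝ≥0∞)) ^ (-γ) := (Finset.sum_filter _ _).symm
    _ ≤ ∑ k ∈ Finset.Icc K M, ((k:ℝ≥0∞)) ^ (-γ) := Finset.sum_le_sum_of_subset hsub
    _ = ENNReal.ofReal (∑ k ∈ Finset.Icc K M, ((k:ℝ)) ^ (-γ)) := by
        rw [ENNReal.ofReal_sum_of_nonneg (fun k _ => Real.rpow_nonneg (Nat.cast_nonneg k) _)]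
        refine Finset.sum_congr rfl fun k hk => ?_
        rw [Finset.mem_Icc] at hk
        rw [ofReal_nat_rpow (le_trans hK hk.1)]
    _ ≤ ENNReal.ofReal ((1 + (γ-1)⁻¹) * (K:ℝ) ^ (-(γ-1))) :=
        ENNReal.ofReal_le_ofReal (sum2_real hγ1 hγ2 K hK M)
    _ = ENNReal.ofReal (1 + (γ-1)⁻¹) * ((K:ℝ≥0∞)) ^ (-(γ-1)) := by
        rw [ENNReal.ofReal_mul (by
          have : (0:ℝ) < γ - 1 := by linarith
          positivity), ofReal_nat_rpow hK]

lemma tsum_int_natAbs (φ : ℕ → ℝ≥0∞) :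
    ∑' m : ℤ, φ m.natAbs ≤ 2 * ∑' k : ℕ, φ k := by
  have h1 : ∑' m : ℤ, φ m.natAbs = ∑' k : ℕ, (φ k + φ (k+1)) := by
    calc ∑' m : ℤ, φ m.natAbs
        = ∑' k : ℕ, (φ ((k:ℤ)).natAbs + φ (-((k:ℤ)+1)).natAbs) :=
          (tsum_nat_add_neg_add_one (f := fun m : ℤ => φ m.natAbs) ENNReal.summable).symm
      _ = ∑' k : ℕ, (φ k + φ (k+1)) := tsum_congr fun k => by
          have e1 : ((k:ℤ)).natAbs = k := Int.natAbs_natCast k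
          have e2 : (-((k:ℤ)+1)).natAbs = k+1 := by omega
          rw [e1, e2]
  rw [h1, ENNReal.tsum_add, two_mul]
  exact add_le_add_right
    (ENNReal.tsum_comp_le_tsum_of_injective (add_left_injective 1) φ) _


/-- The bi-infinite matrix `a_{nm} = |n−m|^{−a} |n|^{−b} |m|^{−b}`, with the convention
that `a_{nm} = 0` whenever `n = m` or one of the indices is `0`. -/
noncomputable def matA (a b : ℝ) (n m : ℤ) : ℝ :=
  if n = m ∨ n = 0 ∨ m = 0 then 0
  else |((n - m : ℤ) : ℝ)| ^ (-a) * |(n : ℝ)| ^ (-b) * |(m : ℝ)| ^ (-b)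

lemma matA_nonneg (a b : ℝ) (n m : ℤ) : 0 ≤ matA a b n m := by
  unfold matA
  split
  · exact le_rfl
  · positivity

lemma matA_symm (a b : ℝ) (n m : ℤ) : matA a b n m = matA a b m n := by
  unfold matA
  by_cases h : n = m ∨ n = 0 ∨ m = 0
  · rw [if_pos h, if_pos (by tauto)]
  · rw [if_neg h, if_neg (by tauto)]
    have e : |((n - m : ℤ) : ℝ)| = |((m - n : ℤ) : ℝ)| := by
      push_cast
      rw [abs_sub_comm]
    rw [e]; ring

lemma Aenn_eq {a b : ℝ} {n m : ℤ} (h : ¬(n = m ∨ n = 0 ∨ m = 0)) :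
    ENNReal.ofReal (matA a b n m) =
      (((n-m).natAbs : ℝ≥0∞)) ^ (-a) * ((n.natAbs : ℝ≥0∞)) ^ (-b)
        * ((m.natAbs : ℝ≥0∞)) ^ (-b) := by
  push_neg at h
  obtain ⟨hnm, hn, hm⟩ := h
  rw [matA, if_neg (by tauto)]
  have habs : ∀ k : ℤ, |((k:ℤ):ℝ)| = ((k.natAbs : ℕ) : ℝ) := by
    intro k
    rw [← Int.cast_abs, Int.abs_eq_natAbs, Int.cast_natCast]
  have h1 : 1 ≤ (n-m).natAbs := by omega
  have h2 : 1 ≤ n.natAbs := by omega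
  have h3 : 1 ≤ m.natAbs := by omega
  rw [habs, habs, habs,
    ENNReal.ofReal_mul (by positivity), ENNReal.ofReal_mul (by positivity),
    ofReal_nat_rpow h1, ofReal_nat_rpow h2, ofReal_nat_rpow h3]

lemma matA_zero_of (a b : ℝ) {n m : ℤ} (h : n = m ∨ n = 0 ∨ m = 0) :
    matA a b n m = 0 := by rw [matA, if_pos h]

/-- constant for the convolution estimate. -/
noncomputable def CB (α β : ℝ) : ℝ≥0∞ :=
  ENNReal.ofReal (4*(1-β)⁻¹) + ENNReal.ofReal (4*(1-α)⁻¹)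
    + ENNReal.ofReal (16*(1+(α+β-1)⁻¹))

lemma CB_ne_top (α β : ℝ) : CB α β ≠ ⊤ := by
  simp [CB, ENNReal.mul_eq_top]

/-- The key convolution estimate:
`∑_{m ≠ 0, n} |n-m|^{-α} |m|^{-β} ≤ C |n|^{1-α-β}` for `0 < α,β < 1`, `α+β > 1`. -/
lemma lemmaB {α β : ℝ} (hα0 : 0 < α) (hα1 : α < 1) (hβ0 : 0 < β) (hβ1 : β < 1)
    (hγ : 1 < α + β) {n : ℤ} (hn : n ≠ 0) :
    ∑' m : ℤ, (if m = 0 ∨ m = n then 0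
        else (((n-m).natAbs : ℝ≥0∞)) ^ (-α) * ((m.natAbs : ℝ≥0∞)) ^ (-β))
      ≤ CB α β * ((n.natAbs : ℝ≥0∞)) ^ (1 - (α+β)) := by
  set N := n.natAbs with hNdef
  have hN : 1 ≤ N := by omega
  have hNne0 : ((N:ℝ≥0∞)) ≠ 0 := by exact_mod_cast Nat.one_le_iff_ne_zero.mp hN
  have hNnetop : ((N:ℝ≥0∞)) ≠ ⊤ := ENNReal.natCast_ne_top N
  set G : ℤ → ℝ≥0∞ := fun m => if m = 0 ∨ m = n then 0
      else (((n-m).natAbs : ℝ≥0∞)) ^ (-α) * ((m.natAbs : ℝ≥0∞)) ^ (-β) with hG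
  set T1 : ℤ → ℝ≥0∞ := fun m => if 1 ≤ m.natAbs ∧ m.natAbs ≤ N then
      2 * ((N:ℝ≥0∞)) ^ (-α) * ((m.natAbs : ℝ≥0∞)) ^ (-β) else 0 with hT1
  set T2 : ℤ → ℝ≥0∞ := fun m => if 1 ≤ (n-m).natAbs ∧ (n-m).natAbs ≤ N then
      2 * ((N:ℝ≥0∞)) ^ (-β) * (((n-m).natAbs : ℝ≥0∞)) ^ (-α) else 0 with hT2
  set T3 : ℤ → ℝ≥0∞ := fun m => if N < 2 * m.natAbs then
      4 * ((m.natAbs : ℝ≥0∞)) ^ (-(α+β)) else 0 with hT3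
  have pointwise : ∀ m : ℤ, G m ≤ T1 m + T2 m + T3 m := by
    intro m
    by_cases hm : m = 0 ∨ m = n
    · rw [hG]
      simp only [if_pos hm]
      exact zero_le
    push_neg at hm
    obtain ⟨hm0, hmn⟩ := hm
    have hp : 1 ≤ m.natAbs := by omega
    have hq : 1 ≤ (n-m).natAbs := by omega
    have tri1 : N ≤ (n-m).natAbs + m.natAbs := by
      have := Int.natAbs_add_le (n-m) m
      simpa using this
    have tri2 : m.natAbs ≤ N + (n-m).natAbs := by
      have := Int.natAbs_add_le n (m-n)
      have e : (m-n).natAbs = (n-m).natAbs := by omega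
      omega
    have hGm : G m = (((n-m).natAbs : ℝ≥0∞)) ^ (-α) * ((m.natAbs : ℝ≥0∞)) ^ (-β) := by
      rw [hG]; simp only [if_neg (by tauto : ¬(m = 0 ∨ m = n))]
    by_cases c1 : 2 * m.natAbs ≤ N
    · have hcond : 1 ≤ m.natAbs ∧ m.natAbs ≤ N := ⟨hp, by omega⟩
      have hNle : N ≤ 2 * (n-m).natAbs := by omega
      have hb : (((n-m).natAbs : ℝ≥0∞)) ^ (-α) ≤ (2:ℝ≥0∞) * ((N:ℝ≥0∞)) ^ (-α) := by
        have := rpow_neg_le_of_le hα0.le hα1.le hN (by norm_num) hNle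
        simpa using this
      calc G m ≤ ((2:ℝ≥0∞) * ((N:ℝ≥0∞)) ^ (-α)) * ((m.natAbs : ℝ≥0∞)) ^ (-β) := by
            rw [hGm]; exact mul_le_mul_left hb _
        _ = T1 m := by rw [hT1]; simp only [if_pos hcond]
        _ ≤ T1 m + T2 m + T3 m := by
            exact le_add_of_le_of_nonneg (le_add_of_le_of_nonneg le_rfl (zero_le)) (zero_le)
    by_cases c2 : 2 * (n-m).natAbs ≤ N
    · have hcond : 1 ≤ (n-m).natAbs ∧ (n-m).natAbs ≤ N := ⟨hq, by omega⟩
      have hNle : N ≤ 2 * m.natAbs := by omega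
      have hb : ((m.natAbs : ℝ≥0∞)) ^ (-β) ≤ (2:ℝ≥0∞) * ((N:ℝ≥0∞)) ^ (-β) := by
        have := rpow_neg_le_of_le hβ0.le hβ1.le hN (by norm_num) hNle
        simpa using this
      calc G m ≤ (((n-m).natAbs : ℝ≥0∞)) ^ (-α) * ((2:ℝ≥0∞) * ((N:ℝ≥0∞)) ^ (-β)) := by
            rw [hGm]; exact mul_le_mul_right hb _
        _ = T2 m := by
            rw [hT2]; simp only [if_pos hcond]; ring
        _ ≤ T1 m + T2 m + T3 m := by
            exact le_add_of_le_of_nonneg (le_add_of_nonneg_of_le (zero_le) le_rfl) (zero_le)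
    · have hcond : N < 2 * m.natAbs := by omega
      have h4 : m.natAbs ≤ 4 * (n-m).natAbs := by omega
      have hb : (((n-m).natAbs : ℝ≥0∞)) ^ (-α) ≤ (4:ℝ≥0∞) * ((m.natAbs : ℝ≥0∞)) ^ (-α) := by
        have := rpow_neg_le_of_le hα0.le hα1.le hp (by norm_num) h4
        simpa using this
      have hmne0 : ((m.natAbs : ℝ≥0∞)) ≠ 0 := by exact_mod_cast Nat.one_le_iff_ne_zero.mp hp
      have hmnetop : ((m.natAbs : ℝ≥0∞)) ≠ ⊤ := ENNReal.natCast_ne_top _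
      calc G m ≤ ((4:ℝ≥0∞) * ((m.natAbs : ℝ≥0∞)) ^ (-α)) * ((m.natAbs : ℝ≥0∞)) ^ (-β) := by
            rw [hGm]; exact mul_le_mul_left hb _
        _ = 4 * ((m.natAbs : ℝ≥0∞)) ^ (-(α+β)) := by
            rw [show -(α+β) = -α + -β by ring, ENNReal.rpow_add _ _ hmne0 hmnetop, mul_assoc]
        _ = T3 m := by rw [hT3]; simp only [if_pos hcond]
        _ ≤ T1 m + T2 m + T3 m := le_add_of_nonneg_of_le (zero_le) le_rfl
  have hsum : ∑' m : ℤ, G m ≤ (∑' m : ℤ, T1 m) + (∑' m : ℤ, T2 m) + (∑' m : ℤ, T3 m) := by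
    calc ∑' m : ℤ, G m ≤ ∑' m : ℤ, (T1 m + T2 m + T3 m) := ENNReal.tsum_le_tsum pointwise
      _ = _ := by rw [ENNReal.tsum_add, ENNReal.tsum_add]
  have hγ2 : α + β < 2 := by linarith
  set ψ1 : ℕ → ℝ≥0∞ := fun k => if 1 ≤ k ∧ k ≤ N then ((k:ℝ≥0∞)) ^ (-β) else 0 with hψ1
  set ψ2 : ℕ → ℝ≥0∞ := fun k => if 1 ≤ k ∧ k ≤ N then ((k:ℝ≥0∞)) ^ (-α) else 0 with hψ2
  set K : ℕ := N/2 + 1 with hK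
  set ψ3 : ℕ → ℝ≥0∞ := fun k => if K ≤ k then ((k:ℝ≥0∞)) ^ (-(α+β)) else 0 with hψ3
  have hT1sum : ∑' m : ℤ, T1 m
      ≤ ENNReal.ofReal (4*(1-β)⁻¹) * ((N:ℝ≥0∞)) ^ (1 - (α+β)) := by
    have e : ∀ m : ℤ, T1 m = 2 * ((N:ℝ≥0∞)) ^ (-α) * ψ1 m.natAbs := by
      intro m
      simp only [hT1, hψ1]
      split_ifs with h
      · rfl
      · rw [mul_zero]
    calc ∑' m : ℤ, T1 m = 2 * ((N:ℝ≥0∞)) ^ (-α) * ∑' m : ℤ, ψ1 m.natAbs := by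
          rw [tsum_congr e, ENNReal.tsum_mul_left]
      _ ≤ 2 * ((N:ℝ≥0∞)) ^ (-α) * (2 * ∑' k : ℕ, ψ1 k) :=
          mul_le_mul_right (tsum_int_natAbs ψ1) _
      _ ≤ 2 * ((N:ℝ≥0∞)) ^ (-α) * (2 * (ENNReal.ofReal ((1-β)⁻¹) * ((N:ℝ≥0∞)) ^ (1-β))) :=
          mul_le_mul_right (mul_le_mul_right (sum1_enn hβ0 hβ1 N hN) _) _
      _ = (4 * ENNReal.ofReal ((1-β)⁻¹)) * (((N:ℝ≥0∞)) ^ (-α) * ((N:ℝ≥0∞)) ^ (1-β)) := by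
          ring
      _ = ENNReal.ofReal (4*(1-β)⁻¹) * ((N:ℝ≥0∞)) ^ (1 - (α+β)) := by
          rw [← ENNReal.rpow_add _ _ hNne0 hNnetop, show -α + (1-β) = 1-(α+β) by ring,
            ENNReal.ofReal_mul (by norm_num : (0:ℝ) ≤ 4), ENNReal.ofReal_ofNat]
  have hT2sum : ∑' m : ℤ, T2 m
      ≤ ENNReal.ofReal (4*(1-α)⁻¹) * ((N:ℝ≥0∞)) ^ (1 - (α+β)) := by
    have hre : ∑' m : ℤ, T2 m = ∑' j : ℤ, (if 1 ≤ j.natAbs ∧ j.natAbs ≤ N then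
        2 * ((N:ℝ≥0∞)) ^ (-β) * ((j.natAbs : ℝ≥0∞)) ^ (-α) else 0) := by
      rw [← Equiv.tsum_eq (Equiv.subLeft n) (fun j : ℤ => if 1 ≤ j.natAbs ∧ j.natAbs ≤ N then
        2 * ((N:ℝ≥0∞)) ^ (-β) * ((j.natAbs : ℝ≥0∞)) ^ (-α) else 0)]
      exact tsum_congr fun m => by rw [hT2]; simp [Equiv.subLeft_apply]
    have e : ∀ j : ℤ, (if 1 ≤ j.natAbs ∧ j.natAbs ≤ N then
        2 * ((N:ℝ≥0∞)) ^ (-β) * ((j.natAbs : ℝ≥0∞)) ^ (-α) else 0)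
        = 2 * ((N:ℝ≥0∞)) ^ (-β) * ψ2 j.natAbs := by
      intro j
      simp only [hψ2]
      split_ifs with h
      · rfl
      · rw [mul_zero]
    calc ∑' m : ℤ, T2 m = 2 * ((N:ℝ≥0∞)) ^ (-β) * ∑' j : ℤ, ψ2 j.natAbs := by
          rw [hre, tsum_congr e, ENNReal.tsum_mul_left]
      _ ≤ 2 * ((N:ℝ≥0∞)) ^ (-β) * (2 * ∑' k : ℕ, ψ2 k) :=
          mul_le_mul_right (tsum_int_natAbs ψ2) _
      _ ≤ 2 * ((N:ℝ≥0∞)) ^ (-β) * (2 * (ENNReal.ofReal ((1-α)⁻¹) * ((N:ℝ≥0∞)) ^ (1-α))) :=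
          mul_le_mul_right (mul_le_mul_right (sum1_enn hα0 hα1 N hN) _) _
      _ = (4 * ENNReal.ofReal ((1-α)⁻¹)) * (((N:ℝ≥0∞)) ^ (-β) * ((N:ℝ≥0∞)) ^ (1-α)) := by
          ring
      _ = ENNReal.ofReal (4*(1-α)⁻¹) * ((N:ℝ≥0∞)) ^ (1 - (α+β)) := by
          rw [← ENNReal.rpow_add _ _ hNne0 hNnetop, show -β + (1-α) = 1-(α+β) by ring,
            ENNReal.ofReal_mul (by norm_num : (0:ℝ) ≤ 4), ENNReal.ofReal_ofNat]
  have hT3sum : ∑' m : ℤ, T3 m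
      ≤ ENNReal.ofReal (16*(1+(α+β-1)⁻¹)) * ((N:ℝ≥0∞)) ^ (1 - (α+β)) := by
    have e : ∀ m : ℤ, T3 m ≤ 4 * ψ3 m.natAbs := by
      intro m
      simp only [hT3, hψ3]
      split_ifs with h1 h2
      · exact le_rfl
      · omega
      · exact zero_le
      · exact le_rfl |>.trans (by rw [mul_zero])
    have hK1 : 1 ≤ K := by omega
    have hKbound : ((K:ℝ≥0∞)) ^ (-(α+β-1)) ≤ 2 * ((N:ℝ≥0∞)) ^ (-(α+β-1)) := by
      have := rpow_neg_le_of_le (t := α+β-1) (by linarith) (by linarith) (c := 2) (x := K)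
        (y := N) hN (by norm_num) (by omega)
      simpa using this
    calc ∑' m : ℤ, T3 m ≤ ∑' m : ℤ, 4 * ψ3 m.natAbs := ENNReal.tsum_le_tsum e
      _ = 4 * ∑' m : ℤ, ψ3 m.natAbs := ENNReal.tsum_mul_left
      _ ≤ 4 * (2 * ∑' k : ℕ, ψ3 k) := mul_le_mul_right (tsum_int_natAbs ψ3) _
      _ ≤ 4 * (2 * (ENNReal.ofReal (1 + (α+β-1)⁻¹) * ((K:ℝ≥0∞)) ^ (-(α+β-1)))) := by
          refine mul_le_mul_right (mul_le_mul_right ?_ _) _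
          exact sum2_enn hγ hγ2 K hK1
      _ ≤ 4 * (2 * (ENNReal.ofReal (1 + (α+β-1)⁻¹) * (2 * ((N:ℝ≥0∞)) ^ (-(α+β-1))))) := by
          exact mul_le_mul_right (mul_le_mul_right (mul_le_mul_right hKbound _) _) _
      _ = (16 * ENNReal.ofReal (1 + (α+β-1)⁻¹)) * ((N:ℝ≥0∞)) ^ (-(α+β-1)) := by ring
      _ = ENNReal.ofReal (16*(1+(α+β-1)⁻¹)) * ((N:ℝ≥0∞)) ^ (1 - (α+β)) := by
          rw [show -(α+β-1) = 1-(α+β) by ring,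
            ENNReal.ofReal_mul (by norm_num : (0:ℝ) ≤ 16), ENNReal.ofReal_ofNat]
  calc ∑' m : ℤ, G m ≤ (∑' m : ℤ, T1 m) + (∑' m : ℤ, T2 m) + (∑' m : ℤ, T3 m) := hsum
    _ ≤ ENNReal.ofReal (4*(1-β)⁻¹) * ((N:ℝ≥0∞)) ^ (1 - (α+β))
        + ENNReal.ofReal (4*(1-α)⁻¹) * ((N:ℝ≥0∞)) ^ (1 - (α+β))
        + ENNReal.ofReal (16*(1+(α+β-1)⁻¹)) * ((N:ℝ≥0∞)) ^ (1 - (α+β)) :=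
        add_le_add (add_le_add hT1sum hT2sum) hT3sum
    _ = CB α β * ((N:ℝ≥0∞)) ^ (1 - (α+β)) := by rw [CB, add_mul, add_mul]

/-- Schur weight. -/
noncomputable def Hw (m : ℤ) : ℝ≥0∞ :=
  if m = 0 then 1 else ((m.natAbs : ℝ≥0∞)) ^ (-(1/2 : ℝ))

lemma Hw_ne_zero (m : ℤ) : Hw m ≠ 0 := by
  rw [Hw]
  split_ifs with h
  · exact one_ne_zero
  · have h1 : 1 ≤ m.natAbs := by omega
    have : (0:ℝ≥0∞) < ((m.natAbs : ℝ≥0∞)) ^ (-(1/2:ℝ)) :=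
      ENNReal.rpow_pos (by exact_mod_cast h1) (ENNReal.natCast_ne_top _)
    exact this.ne'

lemma Hw_le_one (m : ℤ) : Hw m ≤ 1 := by
  rw [Hw]
  split_ifs with h
  · exact le_rfl
  · exact rpow_neg_le_one (by norm_num) (by omega)

lemma Hw_ne_top (m : ℤ) : Hw m ≠ ⊤ :=
  ne_top_of_le_ne_top ENNReal.one_ne_top (Hw_le_one m)

/-- Schur row bound. -/
lemma rowBound {a b : ℝ} (ha0 : 0 < a) (ha1 : a < 1) (hb : 0 ≤ b) (hab : 1 ≤ a + 2*b) :
    ∃ C : ℝ≥0∞, C ≠ ⊤ ∧ ∀ n : ℤ,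
      ∑' m : ℤ, ENNReal.ofReal (matA a b n m) * Hw m ≤ C * Hw n := by
  set t := max (3/2 - a - b) (1 - a/2) with htdef
  have ht0 : 0 < t := lt_of_lt_of_le (by linarith) (le_max_right _ _)
  have ht1 : t < 1 := max_lt (by linarith) (by linarith)
  have hta : 1 < a + t := by
    have : (1 - a/2) ≤ t := le_max_right _ _
    linarith
  have hts : t ≤ b + 1/2 := max_le (by linarith) (by linarith)
  have htb : 3/2 - a - b ≤ t := le_max_left _ _
  refine ⟨CB a t, CB_ne_top a t, fun n => ?_⟩
  by_cases hn : n = 0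
  · subst hn
    have e0 : ∀ m : ℤ, ENNReal.ofReal (matA a b 0 m) * Hw m = 0 := fun m => by
      rw [matA_zero_of a b (Or.inr (Or.inl rfl)), ENNReal.ofReal_zero, zero_mul]
    rw [tsum_congr e0]
    simp
  · have hN : 1 ≤ n.natAbs := by omega
    have hNne0 : ((n.natAbs:ℝ≥0∞)) ≠ 0 := by exact_mod_cast Nat.one_le_iff_ne_zero.mp hN
    have hNnetop : ((n.natAbs:ℝ≥0∞)) ≠ ⊤ := ENNReal.natCast_ne_top _
    have point : ∀ m : ℤ, ENNReal.ofReal (matA a b n m) * Hw m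
        ≤ ((n.natAbs:ℝ≥0∞)) ^ (-b) * (if m = 0 ∨ m = n then 0
          else (((n-m).natAbs:ℝ≥0∞)) ^ (-a) * ((m.natAbs:ℝ≥0∞)) ^ (-t)) := by
      intro m
      by_cases hm : n = m ∨ n = 0 ∨ m = 0
      · rw [matA_zero_of a b hm, ENNReal.ofReal_zero, zero_mul]
        exact zero_le
      · push_neg at hm
        obtain ⟨hnm, hn0, hm0⟩ := hm
        have hp : 1 ≤ m.natAbs := by omega
        have hpne0 : ((m.natAbs:ℝ≥0∞)) ≠ 0 := by exact_mod_cast Nat.one_le_iff_ne_zero.mp hp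
        have hpnetop : ((m.natAbs:ℝ≥0∞)) ≠ ⊤ := ENNReal.natCast_ne_top _
        rw [Aenn_eq (by tauto), if_neg (show ¬(m = 0 ∨ m = n) by tauto)]
        simp only [Hw, if_neg hm0]
        calc (((n-m).natAbs:ℝ≥0∞)) ^ (-a) * ((n.natAbs:ℝ≥0∞)) ^ (-b)
              * ((m.natAbs:ℝ≥0∞)) ^ (-b) * ((m.natAbs:ℝ≥0∞)) ^ (-(1/2:ℝ))
            = ((n.natAbs:ℝ≥0∞)) ^ (-b)
              * ((((n-m).natAbs:ℝ≥0∞)) ^ (-a) * ((m.natAbs:ℝ≥0∞)) ^ (-(b+1/2))) := by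
              rw [show -(b+1/2) = -b + -(1/2:ℝ) by ring,
                ENNReal.rpow_add _ _ hpne0 hpnetop]
              ring
          _ ≤ ((n.natAbs:ℝ≥0∞)) ^ (-b)
              * ((((n-m).natAbs:ℝ≥0∞)) ^ (-a) * ((m.natAbs:ℝ≥0∞)) ^ (-t)) := by
              refine mul_le_mul_right (mul_le_mul_right ?_ _) _
              exact ENNReal.rpow_le_rpow_of_exponent_le (by exact_mod_cast hp) (by linarith)
    calc ∑' m : ℤ, ENNReal.ofReal (matA a b n m) * Hw m
        ≤ ∑' m : ℤ, ((n.natAbs:ℝ≥0∞)) ^ (-b) * (if m = 0 ∨ m = n then 0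
          else (((n-m).natAbs:ℝ≥0∞)) ^ (-a) * ((m.natAbs:ℝ≥0∞)) ^ (-t)) :=
          ENNReal.tsum_le_tsum point
      _ = ((n.natAbs:ℝ≥0∞)) ^ (-b) * ∑' m : ℤ, (if m = 0 ∨ m = n then 0
          else (((n-m).natAbs:ℝ≥0∞)) ^ (-a) * ((m.natAbs:ℝ≥0∞)) ^ (-t)) :=
          ENNReal.tsum_mul_left
      _ ≤ ((n.natAbs:ℝ≥0∞)) ^ (-b) * (CB a t * ((n.natAbs:ℝ≥0∞)) ^ (1-(a+t))) :=
          mul_le_mul_right (lemmaB ha0 ha1 ht0 ht1 hta hn) _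
      _ = CB a t * (((n.natAbs:ℝ≥0∞)) ^ (-b) * ((n.natAbs:ℝ≥0∞)) ^ (1-(a+t))) := by ring
      _ ≤ CB a t * Hw n := by
          refine mul_le_mul_right ?_ _
          rw [← ENNReal.rpow_add _ _ hNne0 hNnetop]
          simp only [Hw, if_neg hn]
          exact ENNReal.rpow_le_rpow_of_exponent_le (by exact_mod_cast hN) (by linarith)

/-- Pointwise bound `A n m ≤ K_n · Hw m`. -/
lemma pointBound {a b : ℝ} (ha0 : 0 < a) (ha1 : a < 1) (hb : 0 ≤ b)
    (hab : 1 ≤ a + 2*b) (n : ℤ) :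
    ∃ Kp : ℝ≥0∞, Kp ≠ ⊤ ∧ ∀ m : ℤ, ENNReal.ofReal (matA a b n m) ≤ Kp * Hw m := by
  have hab2 : (1:ℝ)/2 ≤ a + b := by linarith
  refine ⟨((2*n.natAbs : ℕ) : ℝ≥0∞) ^ ((1/2:ℝ)) + 2, ?_, fun m => ?_⟩
  · refine ENNReal.add_ne_top.2 ⟨?_, ENNReal.ofNat_ne_top⟩
    exact ENNReal.rpow_ne_top_of_nonneg (by norm_num) (ENNReal.natCast_ne_top _)
  by_cases hm : n = m ∨ n = 0 ∨ m = 0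
  · rw [matA_zero_of a b hm, ENNReal.ofReal_zero]
    exact zero_le
  push_neg at hm
  obtain ⟨hnm, hn0, hm0⟩ := hm
  have hp : 1 ≤ m.natAbs := by omega
  have hn1 : 1 ≤ n.natAbs := by omega
  have hq : 1 ≤ (n-m).natAbs := by omega
  rw [Aenn_eq (by tauto)]
  by_cases hc : m.natAbs ≤ 2*n.natAbs
  · have hA1 : (((n-m).natAbs:ℝ≥0∞)) ^ (-a) * ((n.natAbs:ℝ≥0∞)) ^ (-b)
        * ((m.natAbs:ℝ≥0∞)) ^ (-b) ≤ 1 := by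
      have q1 := rpow_neg_le_one ha0.le hq
      have q2 := rpow_neg_le_one hb hn1
      have q3 := rpow_neg_le_one hb hp
      calc (((n-m).natAbs:ℝ≥0∞)) ^ (-a) * ((n.natAbs:ℝ≥0∞)) ^ (-b)
            * ((m.natAbs:ℝ≥0∞)) ^ (-b) ≤ 1 * 1 * 1 := mul_le_mul' (mul_le_mul' q1 q2) q3
        _ = 1 := by norm_num
    have h2N1 : 1 ≤ 2*n.natAbs := by omega
    have h2Nne0 : (((2*n.natAbs : ℕ)):ℝ≥0∞) ≠ 0 := by
      exact_mod_cast Nat.one_le_iff_ne_zero.mp h2N1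
    have hHw : (((2*n.natAbs : ℕ)):ℝ≥0∞) ^ (-(1/2:ℝ)) ≤ Hw m := by
      simp only [Hw, if_neg hm0]
      rw [ENNReal.rpow_neg, ENNReal.rpow_neg]
      refine ENNReal.inv_le_inv.2 ?_
      refine ENNReal.rpow_le_rpow ?_ (by norm_num)
      exact_mod_cast hc
    calc (((n-m).natAbs:ℝ≥0∞)) ^ (-a) * ((n.natAbs:ℝ≥0∞)) ^ (-b)
          * ((m.natAbs:ℝ≥0∞)) ^ (-b) ≤ 1 := hA1
      _ = (((2*n.natAbs : ℕ)):ℝ≥0∞) ^ ((1/2:ℝ)) * (((2*n.natAbs : ℕ)):ℝ≥0∞) ^ (-(1/2:ℝ)) := by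
          rw [← ENNReal.rpow_add _ _ h2Nne0 (ENNReal.natCast_ne_top _)]
          norm_num
      _ ≤ (((2*n.natAbs : ℕ)):ℝ≥0∞) ^ ((1/2:ℝ)) * Hw m := mul_le_mul_right hHw _
      _ ≤ ((((2*n.natAbs : ℕ)):ℝ≥0∞) ^ ((1/2:ℝ)) + 2) * Hw m :=
          mul_le_mul_left (self_le_add_right _ _) _
  · have h4 : m.natAbs ≤ 2*(n-m).natAbs := by omega
    have hb1 : (((n-m).natAbs:ℝ≥0∞)) ^ (-a) ≤ 2 * ((m.natAbs:ℝ≥0∞)) ^ (-a) := by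
      have := rpow_neg_le_of_le ha0.le ha1.le (c := 2) (x := (n-m).natAbs)
        (y := m.natAbs) hp (by norm_num) h4
      simpa using this
    have hpne0 : ((m.natAbs:ℝ≥0∞)) ≠ 0 := by exact_mod_cast Nat.one_le_iff_ne_zero.mp hp
    have hpnetop : ((m.natAbs:ℝ≥0∞)) ≠ ⊤ := ENNReal.natCast_ne_top _
    calc (((n-m).natAbs:ℝ≥0∞)) ^ (-a) * ((n.natAbs:ℝ≥0∞)) ^ (-b)
          * ((m.natAbs:ℝ≥0∞)) ^ (-b)
        ≤ (2 * ((m.natAbs:ℝ≥0∞)) ^ (-a)) * 1 * ((m.natAbs:ℝ≥0∞)) ^ (-b) :=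
          mul_le_mul' (mul_le_mul' hb1 (rpow_neg_le_one hb hn1)) le_rfl
      _ = 2 * (((m.natAbs:ℝ≥0∞)) ^ (-(a+b))) := by
          rw [show -(a+b) = -a + -b by ring, ENNReal.rpow_add _ _ hpne0 hpnetop]
          ring
      _ ≤ 2 * (((m.natAbs:ℝ≥0∞)) ^ (-(1/2:ℝ))) := by
          refine mul_le_mul_right ?_ _
          exact ENNReal.rpow_le_rpow_of_exponent_le (by exact_mod_cast hp) (by linarith)
      _ = 2 * Hw m := by rw [Hw, if_neg hm0]
      _ ≤ ((((2*n.natAbs : ℕ)):ℝ≥0∞) ^ ((1/2:ℝ)) + 2) * Hw m :=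
          mul_le_mul_left (le_add_self) _

lemma real_of_enn {ι : Type*} (f : ι → ℝ) (hf : ∀ i, 0 ≤ f i)
    (h : ∑' i, ENNReal.ofReal (f i) ≠ ⊤) :
    Summable f ∧ ENNReal.ofReal (∑' i, f i) = ∑' i, ENNReal.ofReal (f i) := by
  set g : ι → ℝ≥0 := fun i => (f i).toNNReal with hg
  have hfg : ∀ i, ((g i : ℝ≥0∞)) = ENNReal.ofReal (f i) := fun i => rfl
  have hsg : Summable g := by
    refine ENNReal.tsum_coe_ne_top_iff_summable.1 ?_
    rw [tsum_congr hfg]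
    exact h
  have hsf : Summable f := by
    have hco := NNReal.summable_coe.2 hsg
    refine hco.congr fun i => ?_
    exact Real.coe_toNNReal _ (hf i)
  exact ⟨hsf, ENNReal.ofReal_tsum_of_nonneg hf hsf⟩

/-- For `0 < a < 1`, `b ≥ 0` with `a + 2b ≥ 1`, the matrix
`(a_{nm})` defines a bounded operator on `ℓ²(ℤ)`: there is `K > 0` such that for
every nonnegative square-summable sequence `(x_n)`,
`∑_n (∑_m a_{nm} x_m)² ≤ K² ∑_n x_n²`, and in particular
`∑_n ∑_m a_{nm} x_n x_m ≤ K ∑_n x_n²`. -/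
theorem stmt10 (a b : ℝ) (ha0 : 0 < a) (ha1 : a < 1) (hb : 0 ≤ b)
    (hab : 1 ≤ a + 2 * b) :
    ∃ K > 0, ∀ x : ℤ → ℝ, (∀ n, 0 ≤ x n) → Summable (fun n => x n ^ 2) →
      (∀ n : ℤ, Summable (fun m : ℤ => matA a b n m * x m)) ∧
      (∑' n : ℤ, (∑' m : ℤ, matA a b n m * x m) ^ 2) ≤ K ^ 2 * ∑' n : ℤ, x n ^ 2 ∧
      (∑' n : ℤ, ∑' m : ℤ, matA a b n m * x n * x m) ≤ K * ∑' n : ℤ, x n ^ 2 := by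
  obtain ⟨C, hCtop, hrow⟩ := rowBound ha0 ha1 hb hab
  set D := C + 1 with hD
  have hDtop : D ≠ ⊤ := ENNReal.add_ne_top.2 ⟨hCtop, ENNReal.one_ne_top⟩
  have hD1 : (1:ℝ≥0∞) ≤ D := le_add_self
  have hrowD : ∀ n, ∑' m, ENNReal.ofReal (matA a b n m) * Hw m ≤ D * Hw n :=
    fun n => (hrow n).trans (mul_le_mul_left (self_le_add_right _ _) _)
  set K := D.toReal with hKdef
  have hK1 : 1 ≤ K := by
    have := ENNReal.toReal_mono hDtop hD1
    simpa using this
  have hK0 : 0 < K := lt_of_lt_of_le one_pos hK1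
  refine ⟨K, hK0, fun x hx hx2 => ?_⟩
  set A : ℤ → ℤ → ℝ≥0∞ := fun n m => ENNReal.ofReal (matA a b n m) with hA
  set X : ℤ → ℝ≥0∞ := fun m => ENNReal.ofReal (x m) with hX
  have hAX : ∀ n m, ENNReal.ofReal (matA a b n m * x m) = A n m * X m := fun n m =>
    ENNReal.ofReal_mul (matA_nonneg a b n m)
  have hcol : ∀ m, ∑' n, A n m * Hw n ≤ D * Hw m := by
    intro m
    calc ∑' n, A n m * Hw n = ∑' n, ENNReal.ofReal (matA a b m n) * Hw n :=
          tsum_congr fun n => by rw [hA]; simp only []; rw [matA_symm]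
      _ ≤ D * Hw m := hrowD m
  set SX := ∑' m, X m ^ 2 with hSX
  have hSXeq : ENNReal.ofReal (∑' n, x n ^ 2) = SX := by
    rw [hSX, ENNReal.ofReal_tsum_of_nonneg (fun n => sq_nonneg _) hx2]
    exact tsum_congr fun n => by
      rw [hX]; simp only []; rw [ENNReal.ofReal_pow (hx n)]
  have hSXtop : SX ≠ ⊤ := by rw [← hSXeq]; exact ENNReal.ofReal_ne_top
  have key1 : ∀ n, (∑' m, A n m * X m) ^ 2
      ≤ (D * Hw n) * ∑' m, (A n m * (Hw m)⁻¹) * X m ^ 2 := by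
    intro n
    set f : ℤ → ℝ≥0∞ := fun m => (A n m * Hw m) ^ ((1:ℝ)/2) with hf
    set g : ℤ → ℝ≥0∞ := fun m => (A n m * (Hw m)⁻¹) ^ ((1:ℝ)/2) * X m with hg
    have hfg : ∀ m, A n m * X m = f m * g m := by
      intro m
      rw [hf, hg]
      simp only []
      rw [← mul_assoc, ← ENNReal.mul_rpow_of_nonneg _ _ (by norm_num : (0:ℝ) ≤ 1/2)]
      have e : A n m * Hw m * (A n m * (Hw m)⁻¹) = (A n m)^2 * (Hw m * (Hw m)⁻¹) := by ring
      rw [e, ENNReal.mul_inv_cancel (Hw_ne_zero m) (Hw_ne_top m), mul_one,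
        ← ENNReal.rpow_natCast (A n m) 2, ← ENNReal.rpow_mul]
      norm_num
    have hf2 : ∀ m, f m ^ 2 = A n m * Hw m := by
      intro m; rw [hf]; simp only []
      rw [← ENNReal.rpow_natCast (_ ^ ((1:ℝ)/2)) 2, ← ENNReal.rpow_mul]; norm_num
    have hg2 : ∀ m, g m ^ 2 = (A n m * (Hw m)⁻¹) * X m ^ 2 := by
      intro m; rw [hg]; simp only []
      rw [mul_pow, ← ENNReal.rpow_natCast (_ ^ ((1:ℝ)/2)) 2, ← ENNReal.rpow_mul]; norm_num
    calc (∑' m, A n m * X m) ^ 2 = (∑' m, f m * g m) ^ 2 := by rw [tsum_congr hfg]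
      _ ≤ ((∑' m, f m ^ 2) ^ ((1:ℝ)/2) * (∑' m, g m ^ 2) ^ ((1:ℝ)/2)) ^ 2 :=
          pow_le_pow_left₀ (zero_le) (ennCS f g) 2
      _ = (∑' m, f m ^ 2) * (∑' m, g m ^ 2) := by
          rw [mul_pow, ← ENNReal.rpow_natCast ((∑' m, f m ^ 2) ^ ((1:ℝ)/2)) 2,
            ← ENNReal.rpow_mul, ← ENNReal.rpow_natCast ((∑' m, g m ^ 2) ^ ((1:ℝ)/2)) 2,
            ← ENNReal.rpow_mul]
          norm_num
      _ ≤ (D * Hw n) * (∑' m, g m ^ 2) := by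
          refine mul_le_mul_left ?_ _
          rw [tsum_congr hf2]
          exact hrowD n
      _ = (D * Hw n) * ∑' m, (A n m * (Hw m)⁻¹) * X m ^ 2 := by rw [tsum_congr hg2]
  have main : ∑' n, (∑' m, A n m * X m) ^ 2 ≤ D^2 * SX := by
    calc ∑' n, (∑' m, A n m * X m) ^ 2
        ≤ ∑' n, (D * Hw n) * ∑' m, (A n m * (Hw m)⁻¹) * X m ^ 2 :=
          ENNReal.tsum_le_tsum key1
      _ = D * ∑' n, ∑' m, Hw n * ((A n m * (Hw m)⁻¹) * X m ^ 2) := by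
          rw [← ENNReal.tsum_mul_left]
          exact tsum_congr fun n => by rw [mul_assoc, ← ENNReal.tsum_mul_left]
      _ = D * ∑' m, ∑' n, Hw n * ((A n m * (Hw m)⁻¹) * X m ^ 2) := by
          rw [ENNReal.tsum_comm]
      _ = D * ∑' m, ((Hw m)⁻¹ * X m ^ 2) * ∑' n, A n m * Hw n := by
          congr 1
          refine tsum_congr fun m => ?_
          rw [← ENNReal.tsum_mul_left]
          exact tsum_congr fun n => by ring
      _ ≤ D * ∑' m, ((Hw m)⁻¹ * X m ^ 2) * (D * Hw m) :=
          mul_le_mul_right (ENNReal.tsum_le_tsum fun m => mul_le_mul_right (hcol m) _) _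
      _ = D * ∑' m, D * X m ^ 2 := by
          congr 1
          refine tsum_congr fun m => ?_
          have e : ((Hw m)⁻¹ * X m ^ 2) * (D * Hw m) = D * X m ^2 * ((Hw m)⁻¹ * Hw m) := by
            ring
          rw [e, ENNReal.inv_mul_cancel (Hw_ne_zero m) (Hw_ne_top m), mul_one]
      _ = D^2 * SX := by rw [ENNReal.tsum_mul_left, hSX]; ring
  have rowfin : ∀ n, (∑' m, A n m * X m) ≠ ⊤ := by
    intro n
    obtain ⟨Kp, hKp, hKpb⟩ := pointBound ha0 ha1 hb hab n
    have pointineq : ∀ m, A n m * (Hw m)⁻¹ ≤ Kp := by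
      intro m
      calc A n m * (Hw m)⁻¹ ≤ (Kp * Hw m) * (Hw m)⁻¹ := mul_le_mul_left (hKpb m) _
        _ = Kp * (Hw m * (Hw m)⁻¹) := by ring
        _ = Kp := by rw [ENNReal.mul_inv_cancel (Hw_ne_zero m) (Hw_ne_top m), mul_one]
    have hb2 : (∑' m, A n m * X m)^2 ≤ (D * Hw n) * (Kp * SX) := by
      refine (key1 n).trans (mul_le_mul_right ?_ _)
      calc ∑' m, (A n m * (Hw m)⁻¹) * X m ^ 2 ≤ ∑' m, Kp * X m ^ 2 :=
            ENNReal.tsum_le_tsum fun m => mul_le_mul_left (pointineq m) _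
        _ = Kp * SX := by rw [ENNReal.tsum_mul_left, hSX]
    have hfin : (D * Hw n) * (Kp * SX) ≠ ⊤ :=
      ENNReal.mul_ne_top (ENNReal.mul_ne_top hDtop (Hw_ne_top n))
        (ENNReal.mul_ne_top hKp hSXtop)
    have h2 : (∑' m, A n m * X m)^2 ≠ ⊤ := ne_top_of_le_ne_top hfin hb2
    by_contra hcon
    rw [hcon] at h2
    simp at h2
  have conv1 : ∀ n, Summable (fun m => matA a b n m * x m) ∧
      ENNReal.ofReal (∑' m, matA a b n m * x m) = ∑' m, A n m * X m := by
    intro n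
    have h := real_of_enn (fun m => matA a b n m * x m)
      (fun m => mul_nonneg (matA_nonneg a b n m) (hx m)) (by
        rw [tsum_congr (fun m => hAX n m)]
        exact rowfin n)
    exact ⟨h.1, by rw [h.2]; exact tsum_congr (hAX n)⟩
  set r : ℤ → ℝ := fun n => ∑' m, matA a b n m * x m with hrdef
  have hrnn : ∀ n, 0 ≤ r n := fun n =>
    tsum_nonneg fun m => mul_nonneg (matA_nonneg a b n m) (hx m)
  have hr : ∀ n, ENNReal.ofReal (r n) = ∑' m, A n m * X m := fun n => (conv1 n).2
  have hsq : ∀ n, ENNReal.ofReal (r n ^ 2) = (∑' m, A n m * X m)^2 := fun n => by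
    rw [ENNReal.ofReal_pow (hrnn n), hr n]
  have hD2fin : D^2 * SX ≠ ⊤ := ENNReal.mul_ne_top (ENNReal.pow_ne_top hDtop) hSXtop
  have h2top : ∑' n, ENNReal.ofReal (r n ^2) ≠ ⊤ := by
    rw [tsum_congr hsq]
    exact ne_top_of_le_ne_top hD2fin main
  obtain ⟨hsum2, heq2⟩ := real_of_enn (fun n => r n ^2) (fun n => sq_nonneg _) h2top
  have hSXr : SX.toReal = ∑' n, x n ^ 2 := by
    rw [← hSXeq, ENNReal.toReal_ofReal (tsum_nonneg fun n => sq_nonneg _)]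
  have part2 : (∑' n : ℤ, (∑' m : ℤ, matA a b n m * x m) ^ 2) ≤ K^2 * ∑' n : ℤ, x n ^ 2 := by
    have hle : ENNReal.ofReal (∑' n, r n ^2) ≤ D^2 * SX := by
      rw [heq2, tsum_congr hsq]
      exact main
    have t1 := ENNReal.toReal_mono hD2fin hle
    rw [ENNReal.toReal_ofReal (tsum_nonneg fun n => sq_nonneg (r n)),
      ENNReal.toReal_mul, ENNReal.toReal_pow, hSXr] at t1
    exact t1
  have inner3 : ∀ n, ∑' m, matA a b n m * x n * x m = x n * r n := by
    intro n
    calc ∑' m, matA a b n m * x n * x m = ∑' m, x n * (matA a b n m * x m) :=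
          tsum_congr fun m => by ring
      _ = x n * r n := tsum_mul_left
  have h3 : ∀ n, ENNReal.ofReal (x n * r n) = X n * (∑' m, A n m * X m) := fun n => by
    rw [ENNReal.ofReal_mul (hx n), hr n]
  have enn3 : ∑' n, X n * (∑' m, A n m * X m) ≤ D * SX := by
    calc ∑' n, X n * (∑' m, A n m * X m)
        ≤ (∑' n, X n ^2)^((1:ℝ)/2) * (∑' n, (∑' m, A n m * X m)^2)^((1:ℝ)/2) :=
          ennCS _ _
      _ ≤ SX^((1:ℝ)/2) * (D^2 * SX)^((1:ℝ)/2) :=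
          mul_le_mul' (le_of_eq (by rw [hSX])) (ENNReal.rpow_le_rpow main (by norm_num))
      _ = D * SX := by
          rw [ENNReal.mul_rpow_of_nonneg _ _ (by norm_num : (0:ℝ) ≤ 1/2),
            ← ENNReal.rpow_natCast D 2, ← ENNReal.rpow_mul]
          rw [show ((2:ℕ):ℝ) * (1/2) = 1 by norm_num, ENNReal.rpow_one]
          rw [show SX^((1:ℝ)/2) * (D * SX^((1:ℝ)/2))
            = D * (SX^((1:ℝ)/2) * SX^((1:ℝ)/2)) by ring,
            ← ENNReal.rpow_add_of_nonneg _ _ (by norm_num) (by norm_num)]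
          norm_num
  have hDSfin : D * SX ≠ ⊤ := ENNReal.mul_ne_top hDtop hSXtop
  have h3top : ∑' n, ENNReal.ofReal (x n * r n) ≠ ⊤ := by
    rw [tsum_congr h3]
    exact ne_top_of_le_ne_top hDSfin enn3
  obtain ⟨hsum3, heq3⟩ := real_of_enn (fun n => x n * r n)
    (fun n => mul_nonneg (hx n) (hrnn n)) h3top
  have part3 : (∑' n : ℤ, ∑' m : ℤ, matA a b n m * x n * x m) ≤ K * ∑' n : ℤ, x n ^ 2 := by
    rw [tsum_congr inner3]
    have hle : ENNReal.ofReal (∑' n, x n * r n) ≤ D * SX := by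
      rw [heq3, tsum_congr h3]
      exact enn3
    have t1 := ENNReal.toReal_mono hDSfin hle
    rw [ENNReal.toReal_ofReal (tsum_nonneg fun n => mul_nonneg (hx n) (hrnn n)),
      ENNReal.toReal_mul, hSXr] at t1
    exact t1
  exact ⟨fun n => (conv1 n).1, part2, part3⟩
end
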